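/- arXiv:2007.08845 — 3 statements merged into one kernel-verified Lean document; each statement's English description precedes it below -/
import Mathlib

section
/- A Hausdorff topological space possesses a locally strict Sorgenfrey base with strict branches if and only if it is homeomorphic to the Sorgenfrey line. In particular, the Sorgenfrey line is, up to homeomorphism, the unique Hausdorff space having a locally strict Sorgenfrey base with strict branches. -/
open Set Filter Topology TopologicalSpace Function

noncomputable section

/-- The Sorgenfrey topology on `ℝ`: generated by half-open intervals `[a, b)`. -/
def sorgenfreyTop : TopologicalSpace ℝ :=
  TopologicalSpace.generateFrom {s : Set ℝ | ∃ a b : ℝ, s = Set.Ico a b}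

/-- The initial segment `p↾n` of an infinite sequence, as a list. -/
def restr (p : ℕ → ℕ) (n : ℕ) : List ℕ := (List.range n).map p

/-- `fruit V p = ⋂ n, V (p↾n)`. -/
def fruit {X : Type*} (V : List ℕ → Set X) (p : ℕ → ℕ) : Set X := ⋂ n, V (restr p n)

/-- A Souslin scheme is covering if `V ⟨⟩ = X` and `V a = ⋃ n, V (a ⌢ n)`. -/
def Covering {X : Type*} (V : List ℕ → Set X) : Prop :=
  V [] = Set.univ ∧ ∀ a : List ℕ, V a = ⋃ n : ℕ, V (a ++ [n])

/-- A Souslin scheme is complete if every fruit is nonempty. -/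
def CompleteScheme {X : Type*} (V : List ℕ → Set X) : Prop :=
  ∀ q : ℕ → ℕ, (fruit V q).Nonempty

/-- A Souslin scheme has strict branches if every fruit is a singleton. -/
def StrictBranches {X : Type*} (V : List ℕ → Set X) : Prop :=
  ∀ q : ℕ → ℕ, ∃ x : X, fruit V q = {x}

/-- A Souslin scheme is locally strict. -/
def LocallyStrict {X : Type*} (V : List ℕ → Set X) : Prop :=
  (∀ a : List ℕ, V a = ⋃ n : ℕ, V (a ++ [n])) ∧
  ∀ a : List ℕ, ∀ m k : ℕ, m ≠ k → V (a ++ [m]) ∩ V (a ++ [k]) = ∅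

/-- `q ◁ p` for infinite sequences: `q↾n = p↾n` and `q n < p n` for some `n`. -/
def tri (q p : ℕ → ℕ) : Prop := ∃ n : ℕ, restr q n = restr p n ∧ q n < p n

/-- `q ⊴ p` for infinite sequences. -/
def trieq (q p : ℕ → ℕ) : Prop := tri q p ∨ q = p

/-- `q ◁ s` where `q` is an infinite sequence and `s` a finite one. -/
def triL (q : ℕ → ℕ) (s : List ℕ) : Prop :=
  ∃ n : ℕ, ∃ h : n < s.length, restr q n = s.take n ∧ q n < s.get ⟨n, h⟩

/-- `rsequences(q, n) = {p | q ◁ p ∧ q↾n = p↾n}`. -/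
def rsequences (q : ℕ → ℕ) (n : ℕ) : Set (ℕ → ℕ) :=
  {p | tri q p ∧ restr q n = restr p n}

/-- `rsubtree(q, n)`: finite sequences `s` such that `q↾n ⊏ s` and `q ◁ s`. -/
def rsubtree (q : ℕ → ℕ) (n : ℕ) : Set (List ℕ) :=
  {s | restr q n <+: s ∧ restr q n ≠ s ∧ triL q s}

/-- `cut(V, q, n) = ⋃ {fruit(V, p) : p ∈ rsequences(q, n)}`. -/
def cut {X : Type*} (V : List ℕ → Set X) (q : ℕ → ℕ) (n : ℕ) : Set X :=
  ⋃ p ∈ rsequences q n, fruit V p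

/-- `branches(V, x) = {q | x ∈ fruit(V, q)}`. -/
def branches {X : Type*} (V : List ℕ → Set X) (x : X) : Set (ℕ → ℕ) :=
  {q | x ∈ fruit V q}

/-- `q` is a `τ`-base branch of `x` in `V`: `q ∈ branches(V, x)` and
`{cut(V, q, m) ∪ {x} : m ∈ ℕ}` is a neighborhood base of open sets at `x`. -/
def IsBaseBranch {X : Type*} (τ : TopologicalSpace X) (V : List ℕ → Set X)
    (q : ℕ → ℕ) (x : X) : Prop :=
  x ∈ fruit V q ∧ (∀ m : ℕ, IsOpen[τ] (cut V q m ∪ {x})) ∧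
    (@nhds X τ x).HasBasis (fun _ : ℕ => True) (fun m : ℕ => cut V q m ∪ {x})

/-- `BB(V, x, τ)`: the set of `τ`-base branches of `x` in `V`. -/
def BB {X : Type*} (τ : TopologicalSpace X) (V : List ℕ → Set X) (x : X) : Set (ℕ → ℕ) :=
  {q | IsBaseBranch τ V q x}

/-- A Sorgenfrey base for a space: an open complete covering Souslin scheme
satisfying (S1) and (S2). -/
def IsSorgenfreyBase {X : Type*} (τ : TopologicalSpace X) (V : List ℕ → Set X) : Prop :=
  (∀ a : List ℕ, IsOpen[τ] (V a)) ∧ CompleteScheme V ∧ Covering V ∧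
  (∀ x : X, ∀ q ∈ branches V x, ∀ n : ℕ, ∃ t ∈ BB τ V x, restr t n = restr q n) ∧
  (∀ q : ℕ → ℕ, ∃ z : X, q ∈ BB τ V z)

/-- The Souslin scheme `S` on the Baire set: `S a = {p | a ⊑ p}`. -/
def SchemeS (a : List ℕ) : Set (ℕ → ℕ) := {p | restr p a.length = a}

/-- The topology `σ_𝕊` on `ℕ → ℕ` generated by the base
`{cut(S, p, n) ∪ {p} : p ∈ ℕ → ℕ, n ∈ ℕ}`. -/
def sigmaS : TopologicalSpace (ℕ → ℕ) :=
  TopologicalSpace.generateFrom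
    {U : Set (ℕ → ℕ) | ∃ p : ℕ → ℕ, ∃ n : ℕ, U = cut SchemeS p n ∪ {p}}

/-! ### Basic lemmas on `restr` and `tri` -/

lemma restr_length (q : ℕ → ℕ) (n : ℕ) : (restr q n).length = n := by
  simp [restr]

lemma restr_succ (q : ℕ → ℕ) (n : ℕ) : restr q (n + 1) = restr q n ++ [q n] := by
  simp [restr, List.range_succ]

lemma restr_eq_iff {q p : ℕ → ℕ} {n : ℕ} : restr q n = restr p n ↔ ∀ i < n, q i = p i := by
  constructor
  · intro h i hi
    have h' := congrArg (fun l => l[i]?) h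
    simp only [restr, List.getElem?_map, List.getElem?_range hi, Option.map_some] at h'
    exact Option.some_injective _ h' 
  · intro h
    apply List.ext_get (by simp [restr])
    intro i h1 h2
    simp only [restr, List.get_eq_getElem, List.getElem_map, List.getElem_range]
    exact h i (by simpa [restr] using h1)

lemma restr_take {q : ℕ → ℕ} {m n : ℕ} (h : m ≤ n) : (restr q n).take m = restr q m := by
  simp [restr, ← List.map_take, List.take_range, Nat.min_eq_left h]

/-- The witness of `tri q p` is below the first difference of any equal restrictions. -/
lemma tri_witness_ge {q p : ℕ → ℕ} {n k : ℕ} (hr : restr q n = restr p n)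
    (hk : restr q k = restr p k) (hlt : q k < p k) : n ≤ k := by
  by_contra hnk
  push_neg at hnk
  exact absurd (restr_eq_iff.1 hr k hnk) (Nat.ne_of_lt hlt)

lemma tri_total {q p : ℕ → ℕ} (h : q ≠ p) : tri q p ∨ tri p q := by
  have hx : ∃ n, q n ≠ p n := by
    by_contra hc; push_neg at hc; exact h (funext hc)
  classical
  let k := Nat.find hx
  have hk : q k ≠ p k := Nat.find_spec hx
  have hmin : ∀ i < k, q i = p i := fun i hi => by
    by_contra hne; exact absurd (Nat.find_le hne) (Nat.not_le.2 hi)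
  have hr : restr q k = restr p k := restr_eq_iff.2 hmin
  rcases Nat.lt_or_ge (q k) (p k) with hlt | hge
  · exact Or.inl ⟨k, hr, hlt⟩
  · exact Or.inr ⟨k, hr.symm, lt_of_le_of_ne hge fun e => hk e.symm⟩

lemma not_tri_self (q : ℕ → ℕ) : ¬ tri q q := by
  rintro ⟨n, -, hn⟩; exact lt_irrefl _ hn

lemma rsequences_anti {q : ℕ → ℕ} {m n : ℕ} (h : m ≤ n) :
    rsequences q n ⊆ rsequences q m := by
  rintro p ⟨ht, hr⟩
  refine ⟨ht, ?_⟩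
  have := congrArg (fun l => l.take m) hr
  simpa [restr_take h] using this

lemma mem_rsequences_iff {q p : ℕ → ℕ} {n : ℕ} :
    p ∈ rsequences q n ↔ restr q n = restr p n ∧ ∃ k, n ≤ k ∧ restr q k = restr p k ∧ q k < p k := by
  constructor
  · rintro ⟨⟨k, hk, hlt⟩, hr⟩
    exact ⟨hr, k, tri_witness_ge hr hk hlt, hk, hlt⟩
  · rintro ⟨hr, k, -, hk, hlt⟩
    exact ⟨⟨k, hk, hlt⟩, hr⟩

/-! ### Generic scheme lemmas -/

section Generic
variable {X : Type*} {V : List ℕ → Set X}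

lemma fruit_subset (V : List ℕ → Set X) (q : ℕ → ℕ) (n : ℕ) : fruit V q ⊆ V (restr q n) :=
  Set.iInter_subset _ n

/-- Under a covering, membership in a longer node implies membership in its prefixes. -/
lemma covering_take (hc : ∀ a : List ℕ, V a = ⋃ n : ℕ, V (a ++ [n])) :
    ∀ (a : List ℕ) (x : X), x ∈ V a → ∀ m ≤ a.length, x ∈ V (a.take m) := by
  intro a
  induction a using List.reverseRec with
  | nil => intro x hx m hm; simpa using hx
  | append_singleton b k ih =>
    intro x hx m hm
    rcases Nat.lt_or_ge m (b.length + 1) with h | h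
    · have hb : x ∈ V b := by
        rw [hc b]; exact Set.mem_iUnion.2 ⟨k, hx⟩
      rw [List.take_append_of_le_length (Nat.lt_succ_iff.1 h)]
      exact ih x hb m (Nat.lt_succ_iff.1 h)
    · have hm1 : m = b.length + 1 := le_antisymm (by simpa using hm) h
      subst hm1
      rw [show b.length + 1 = (b ++ [k]).length by simp, List.take_length]
      exact hx

/-- In a locally strict scheme, nodes of the same length containing a common point are equal. -/
lemma locallyStrict_unique_node (hV : LocallyStrict V) :
    ∀ {a b : List ℕ}, a.length = b.length → ∀ {x : X}, x ∈ V a → x ∈ V b → a = b := by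
  intro a
  induction a using List.reverseRec with
  | nil => intro b hb x _ _; exact (List.eq_nil_of_length_eq_zero hb.symm).symm
  | append_singleton c k ih =>
    intro b hb x hxa hxb
    induction b using List.reverseRec with
    | nil => simp at hb
    | append_singleton d m _ =>
      have hlen : c.length = d.length := by simpa using hb
      have hc : x ∈ V c := by
        have := covering_take hV.1 (c ++ [k]) x hxa c.length (by simp)
        simpa [List.take_append_of_le_length le_rfl] using this
      have hd : x ∈ V d := by
        have := covering_take hV.1 (d ++ [m]) x hxb d.length (by simp)
        simpa [List.take_append_of_le_length le_rfl] using this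
      have hcd : c = d := ih hlen hc hd
      subst hcd
      by_cases hkm : k = m
      · rw [hkm]
      · exact absurd (Set.mem_inter hxa hxb) (by rw [hV.2 c k m hkm]; exact notMem_empty x)

/-- In a locally strict scheme, each point has at most one branch. -/
lemma locallyStrict_unique_branch (hV : LocallyStrict V) {x : X} {p q : ℕ → ℕ}
    (hp : x ∈ fruit V p) (hq : x ∈ fruit V q) : p = q := by
  funext n
  have h := locallyStrict_unique_node hV (a := restr p (n+1)) (b := restr q (n+1))
    (by simp [restr_length]) (fruit_subset V p (n+1) hp) (fruit_subset V q (n+1) hq)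
  have := restr_eq_iff.1 h n (Nat.lt_succ_self n)
  exact this

end Generic
/-! ### Digits of a point, and points of branches -/

section Generic2
variable {X : Type*}

/-- Next digit of `x` below node `a`. -/
noncomputable def nd (V : List ℕ → Set X) (x : X) (a : List ℕ) : ℕ :=
  @dite _ (∃ k, x ∈ V (a ++ [k])) (Classical.dec _) (fun h => h.choose) (fun _ => 0)

/-- The node of depth `n` containing `x`. -/
noncomputable def dl (V : List ℕ → Set X) (x : X) : ℕ → List ℕ
  | 0 => []
  | n + 1 => dl V x n ++ [nd V x (dl V x n)]

/-- The branch of `x`. -/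
noncomputable def gdig (V : List ℕ → Set X) (x : X) (n : ℕ) : ℕ := nd V x (dl V x n)

lemma dl_eq_restr (V : List ℕ → Set X) (x : X) (n : ℕ) : dl V x n = restr (gdig V x) n := by
  induction n with
  | zero => simp [dl, restr]
  | succ n ih =>
    rw [dl, restr_succ, show nd V x (dl V x n) = gdig V x n from rfl, ih]

lemma mem_dl {V : List ℕ → Set X} (hcov : Covering V) (x : X) : ∀ n, x ∈ V (dl V x n) := by
  intro n
  induction n with
  | zero => simp [dl, hcov.1]
  | succ n ih =>
    have hex : ∃ k, x ∈ V (dl V x n ++ [k]) := by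
      have := (hcov.2 (dl V x n)) ▸ ih
      exact Set.mem_iUnion.1 this
    rw [dl]
    simp only [nd]
    rw [dif_pos hex]
    exact hex.choose_spec

lemma gdig_mem_fruit {V : List ℕ → Set X} (hcov : Covering V) (x : X) :
    x ∈ fruit V (gdig V x) := by
  refine Set.mem_iInter.2 fun n => ?_
  rw [← dl_eq_restr]
  exact mem_dl hcov x n

/-- The point of a branch, for a scheme with strict branches. -/
noncomputable def ptb {V : List ℕ → Set X} (hs : StrictBranches V) (q : ℕ → ℕ) : X :=
  (hs q).choose

lemma fruit_eq_ptb {V : List ℕ → Set X} (hs : StrictBranches V) (q : ℕ → ℕ) :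
    fruit V q = {ptb hs q} := (hs q).choose_spec

lemma ptb_mem {V : List ℕ → Set X} (hs : StrictBranches V) (q : ℕ → ℕ) :
    ptb hs q ∈ fruit V q := by rw [fruit_eq_ptb]; rfl

lemma eq_ptb_of_mem {V : List ℕ → Set X} (hs : StrictBranches V) {q : ℕ → ℕ} {x : X}
    (hx : x ∈ fruit V q) : x = ptb hs q := by
  rw [fruit_eq_ptb hs] at hx; exact hx

lemma cut_eq_image {V : List ℕ → Set X} (hs : StrictBranches V) (q : ℕ → ℕ) (n : ℕ) :
    cut V q n = ptb hs '' rsequences q n := by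
  ext x
  simp only [cut, Set.mem_iUnion, Set.mem_image]
  constructor
  · rintro ⟨p, hp, hx⟩; exact ⟨p, hp, (eq_ptb_of_mem hs hx).symm⟩
  · rintro ⟨p, hp, hx⟩; exact ⟨p, hp, hx ▸ ptb_mem hs p⟩

end Generic2

/-! ### A good system and the generic homeomorphism -/

/-- A "good system": the key structure extracted from a locally strict Sorgenfrey base
with strict branches. -/
def GoodSys {X : Type*} (τ : TopologicalSpace X) (V : List ℕ → Set X) : Prop :=
  LocallyStrict V ∧ StrictBranches V ∧ Covering V ∧
    ∀ (q : ℕ → ℕ) (x : X), x ∈ fruit V q → IsBaseBranch τ V q x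

section Homeo
variable {X Y : Type*} {τ : TopologicalSpace X} {σ : TopologicalSpace Y}
variable {V : List ℕ → Set X} {U : List ℕ → Set Y}

lemma goodSys_continuous (hV : GoodSys τ V) (hU : GoodSys σ U) :
    Continuous[τ, σ] (fun x => ptb hU.2.1 (gdig V x)) := by
  rw [continuous_iff_continuousAt]
  intro x
  set q := gdig V x with hq
  have hxq : x ∈ fruit V q := gdig_mem_fruit hV.2.2.1 x
  have hx : x = ptb hV.2.1 q := eq_ptb_of_mem hV.2.1 hxq
  have hfx : ptb hU.2.1 q ∈ fruit U q := ptb_mem hU.2.1 q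
  have hbx := (hV.2.2.2 q x hxq).2.2
  have hby := (hU.2.2.2 q (ptb hU.2.1 q) hfx).2.2
  rw [ContinuousAt]
  rw [hbx.tendsto_iff hby]
  intro m _
  refine ⟨m, trivial, fun z hz => ?_⟩
  rcases hz with hz | hz
  · left
    rw [cut_eq_image hV.2.1] at hz
    rcases hz with ⟨p, hp, hz⟩
    have hzp : z ∈ fruit V p := hz ▸ ptb_mem hV.2.1 p
    have hgz : gdig V z = p :=
      locallyStrict_unique_branch hV.1 (gdig_mem_fruit hV.2.2.1 z) hzp
    rw [cut_eq_image hU.2.1]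
    exact ⟨p, hp, by rw [hgz]⟩
  · right
    rcases hz with rfl
    rfl

lemma goodSys_homeo (hV : GoodSys τ V) (hU : GoodSys σ U) :
    Nonempty (@Homeomorph X Y τ σ) := by
  refine ⟨@Homeomorph.mk _ _ τ σ
    ⟨fun x => ptb hU.2.1 (gdig V x), fun y => ptb hV.2.1 (gdig U y), ?_, ?_⟩ ?_ ?_⟩
  · intro x
    simp only
    set q := gdig V x with hq
    have hxq : x ∈ fruit V q := gdig_mem_fruit hV.2.2.1 x
    have hfx : ptb hU.2.1 q ∈ fruit U q := ptb_mem hU.2.1 q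
    have : gdig U (ptb hU.2.1 q) = q :=
      locallyStrict_unique_branch hU.1 (gdig_mem_fruit hU.2.2.1 _) hfx
    rw [this]
    exact (eq_ptb_of_mem hV.2.1 hxq).symm
  · intro y
    simp only
    set q := gdig U y with hq
    have hyq : y ∈ fruit U q := gdig_mem_fruit hU.2.2.1 y
    have hfy : ptb hV.2.1 q ∈ fruit V q := ptb_mem hV.2.1 q
    have : gdig V (ptb hV.2.1 q) = q :=
      locallyStrict_unique_branch hV.1 (gdig_mem_fruit hV.2.2.1 _) hfy
    rw [this]
    exact (eq_ptb_of_mem hU.2.1 hyq).symm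
  · exact goodSys_continuous hV hU
  · exact goodSys_continuous hU hV

end Homeo
/-! ### The interval scheme on the Sorgenfrey line -/

/-- Fraction marking the left end of the `k`-th piece of an interval. -/
def pc (k : ℕ) : ℝ := 1 - (2:ℝ)⁻¹ ^ k

/-- One subdivision step: the `k`-th piece of the interval `[s.1, s.1 + s.2)`. -/
def stp (k : ℕ) (s : ℝ × ℝ) : ℝ × ℝ := (s.1 + s.2 * pc k, s.2 * (2:ℝ)⁻¹ ^ (k + 1))

/-- Iterated subdivision along a finite sequence. -/
def pos : List ℕ → ℝ × ℝ → ℝ × ℝ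
  | [], s => s
  | k :: a, s => pos a (stp k s)

/-- An enumeration of the integers. -/
def eZ (n : ℕ) : ℤ := (Denumerable.eqv ℤ).symm n

lemma eZ_injective : Function.Injective eZ := (Denumerable.eqv ℤ).symm.injective

/-- The interval (left endpoint and width) of a nonempty node. -/
def bse : List ℕ → ℝ × ℝ
  | [] => (0, 1)
  | k :: a => pos a ((eZ k : ℝ), 1)

/-- The interval Souslin scheme on `ℝ`. -/
def WS : List ℕ → Set ℝ
  | [] => Set.univ
  | k :: a => Set.Ico (bse (k :: a)).1 ((bse (k :: a)).1 + (bse (k :: a)).2)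

lemma pc_zero : pc 0 = 0 := by simp [pc]

lemma pc_nonneg (k : ℕ) : 0 ≤ pc k := by
  have : (2:ℝ)⁻¹ ^ k ≤ 1 := pow_le_one₀ (by norm_num) (by norm_num)
  simp only [pc]; linarith

lemma pc_lt_one (k : ℕ) : pc k < 1 := by
  have : (0:ℝ) < (2:ℝ)⁻¹ ^ k := by positivity
  simp only [pc]; linarith

lemma pc_mono {k m : ℕ} (h : k ≤ m) : pc k ≤ pc m := by
  have : (2:ℝ)⁻¹ ^ m ≤ (2:ℝ)⁻¹ ^ k :=
    pow_le_pow_of_le_one (by norm_num) (by norm_num) h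
  simp only [pc]; linarith

lemma pc_succ (k : ℕ) : pc k + (2:ℝ)⁻¹ ^ (k + 1) = pc (k + 1) := by
  simp only [pc, pow_succ]
  ring

lemma exists_pc_gt {c : ℝ} (h : c < 1) : ∃ k, c < pc k := by
  obtain ⟨k, hk⟩ := exists_pow_lt_of_lt_one (show (0:ℝ) < 1 - c by linarith)
    (show (2:ℝ)⁻¹ < 1 by norm_num)
  exact ⟨k, by simp only [pc]; linarith⟩

lemma pos_append (a b : List ℕ) (s : ℝ × ℝ) : pos (a ++ b) s = pos b (pos a s) := by
  induction a generalizing s with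
  | nil => rfl
  | cons k a ih => simp [pos, ih]

lemma stp_fst (k : ℕ) (s : ℝ × ℝ) : (stp k s).1 = s.1 + s.2 * pc k := rfl

lemma stp_snd (k : ℕ) (s : ℝ × ℝ) : (stp k s).2 = s.2 * (2:ℝ)⁻¹ ^ (k + 1) := rfl

lemma stp_snd_pos {s : ℝ × ℝ} (h : 0 < s.2) (k : ℕ) : 0 < (stp k s).2 := by
  rw [stp_snd]; positivity

lemma pos_snd_pos (a : List ℕ) {s : ℝ × ℝ} (h : 0 < s.2) : 0 < (pos a s).2 := by
  induction a generalizing s with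
  | nil => exact h
  | cons k a ih => exact ih (stp_snd_pos h k)

lemma stp_lo {s : ℝ × ℝ} (h : 0 ≤ s.2) (k : ℕ) : s.1 ≤ (stp k s).1 := by
  rw [stp_fst]
  nlinarith [pc_nonneg k]

lemma stp_hi (k : ℕ) (s : ℝ × ℝ) : (stp k s).1 + (stp k s).2 = s.1 + s.2 * pc (k + 1) := by
  rw [stp_fst, stp_snd, ← pc_succ]
  ring

lemma stp_hi_le {s : ℝ × ℝ} (h : 0 ≤ s.2) (k : ℕ) : (stp k s).1 + (stp k s).2 ≤ s.1 + s.2 := by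
  rw [stp_hi]
  nlinarith [pc_lt_one (k + 1)]

lemma pos_nest (a : List ℕ) {s : ℝ × ℝ} (h : 0 < s.2) :
    s.1 ≤ (pos a s).1 ∧ (pos a s).1 + (pos a s).2 ≤ s.1 + s.2 := by
  induction a generalizing s with
  | nil => exact ⟨le_rfl, le_rfl⟩
  | cons k a ih =>
    have h2 := ih (s := stp k s) (stp_snd_pos h k)
    exact ⟨le_trans (stp_lo (le_of_lt h) k) h2.1,
      le_trans h2.2 (stp_hi_le (le_of_lt h) k)⟩

lemma pos_snd_le (a : List ℕ) {s : ℝ × ℝ} (h : 0 < s.2) :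
    (pos a s).2 ≤ s.2 * (2:ℝ)⁻¹ ^ a.length := by
  induction a generalizing s with
  | nil => simp [pos]
  | cons k a ih =>
    have h2 := ih (s := stp k s) (stp_snd_pos h k)
    have h3 : (stp k s).2 ≤ s.2 * (2:ℝ)⁻¹ := by
      rw [stp_snd]
      have : (2:ℝ)⁻¹ ^ (k+1) ≤ (2:ℝ)⁻¹ ^ 1 :=
        pow_le_pow_of_le_one (by norm_num) (by norm_num) (by omega)
      nlinarith
    calc (pos a (stp k s)).2 ≤ (stp k s).2 * (2:ℝ)⁻¹ ^ a.length := h2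
      _ ≤ s.2 * (2:ℝ)⁻¹ * (2:ℝ)⁻¹ ^ a.length := by
          have : (0:ℝ) < (2:ℝ)⁻¹ ^ a.length := by positivity
          nlinarith
      _ = s.2 * (2:ℝ)⁻¹ ^ (k :: a).length := by
          simp [pow_succ]
          ring

/-- Existence: every point of an interval lies in one of its pieces. -/
lemma exists_piece {s : ℝ × ℝ} (h : 0 < s.2) {x : ℝ}
    (hx : x ∈ Set.Ico s.1 (s.1 + s.2)) :
    ∃ k, x ∈ Set.Ico (stp k s).1 ((stp k s).1 + (stp k s).2) := by
  classical
  have hc1 : (x - s.1) / s.2 < 1 := (div_lt_one h).2 (by linarith [hx.2])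
  have hex : ∃ k, (x - s.1) / s.2 < pc k := exists_pc_gt hc1
  have h0 : ¬ ((x - s.1) / s.2 < pc 0) := by
    rw [pc_zero]
    push_neg
    exact div_nonneg (by linarith [hx.1]) (le_of_lt h)
  obtain ⟨j, hj⟩ : ∃ j, Nat.find hex = j + 1 := by
    cases hfind : Nat.find hex with
    | zero => exact absurd (hfind ▸ Nat.find_spec hex) h0
    | succ j => exact ⟨j, rfl⟩
  have hspec : (x - s.1) / s.2 < pc (j + 1) := hj ▸ Nat.find_spec hex
  have hmin : pc j ≤ (x - s.1) / s.2 := by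
    by_contra hcon
    push_neg at hcon
    have := Nat.find_le (h := hex) hcon
    omega
  refine ⟨j, ?_, ?_⟩
  · rw [stp_fst]
    have := (le_div_iff₀ h).1 hmin
    linarith
  · rw [stp_hi]
    have := (div_lt_iff₀ h).1 hspec
    linarith

/-- Disjointness of distinct pieces. -/
lemma piece_disj {s : ℝ × ℝ} (h : 0 < s.2) {m k : ℕ} (hmk : m ≠ k) :
    Set.Ico (stp m s).1 ((stp m s).1 + (stp m s).2) ∩
      Set.Ico (stp k s).1 ((stp k s).1 + (stp k s).2) = ∅ := by
  have key : ∀ m k : ℕ, m < k → ∀ x, x ∈ Set.Ico (stp m s).1 ((stp m s).1 + (stp m s).2) →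
      x ∈ Set.Ico (stp k s).1 ((stp k s).1 + (stp k s).2) → False := by
    intro m k hlt x hxm hxk
    have h1 : x < (stp m s).1 + (stp m s).2 := hxm.2
    have h2 : (stp k s).1 ≤ x := hxk.1
    rw [stp_hi] at h1
    rw [stp_fst] at h2
    have h3 : pc (m + 1) ≤ pc k := pc_mono (by omega)
    nlinarith
  ext x
  simp only [Set.mem_inter_iff, Set.mem_empty_iff_false, iff_false, not_and]
  intro hxm hxk
  rcases Nat.lt_or_ge m k with hlt | hge
  · exact key m k hlt x hxm hxk
  · exact key k m (lt_of_le_of_ne hge (Ne.symm hmk)) x hxk hxm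
lemma bse_cons (k : ℕ) (a : List ℕ) : bse (k :: a) = pos a ((eZ k : ℝ), 1) := rfl

lemma bse_append_ne {a : List ℕ} (ha : a ≠ []) (m : ℕ) :
    bse (a ++ [m]) = stp m (bse a) := by
  cases a with
  | nil => exact absurd rfl ha
  | cons k b =>
    rw [List.cons_append, bse_cons, bse_cons, pos_append]
    rfl

lemma bse_snd_pos {a : List ℕ} (ha : a ≠ []) : 0 < (bse a).2 := by
  cases a with
  | nil => exact absurd rfl ha
  | cons k b => exact pos_snd_pos b (by norm_num)

lemma WS_ne {a : List ℕ} (ha : a ≠ []) :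
    WS a = Set.Ico (bse a).1 ((bse a).1 + (bse a).2) := by
  cases a with
  | nil => exact absurd rfl ha
  | cons k b => rfl

lemma WS_single (k : ℕ) : WS [k] = Set.Ico (eZ k : ℝ) ((eZ k : ℝ) + 1) := rfl

lemma WS_covering : Covering WS := by
  constructor
  · rfl
  · intro a
    cases a with
    | nil =>
      ext x
      rw [show WS [] = Set.univ from rfl]
      simp only [Set.mem_univ, true_iff, Set.mem_iUnion, List.nil_append]
      refine ⟨(Denumerable.eqv ℤ) ⌊x⌋, ?_⟩
      rw [WS_single]
      have heq : eZ ((Denumerable.eqv ℤ) ⌊x⌋) = ⌊x⌋ := (Denumerable.eqv ℤ).symm_apply_apply _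
      rw [heq]
      exact ⟨Int.floor_le x, Int.lt_floor_add_one x⟩
    | cons k b =>
      ext x
      simp only [Set.mem_iUnion]
      constructor
      · intro hx
        obtain ⟨m, hm⟩ := exists_piece (bse_snd_pos (a := k :: b) (by simp)) hx
        refine ⟨m, ?_⟩
        rw [WS_ne (a := (k :: b) ++ [m]) (by simp), bse_append_ne (by simp)]
        exact hm
      · rintro ⟨m, hm⟩
        rw [WS_ne (a := (k :: b) ++ [m]) (by simp), bse_append_ne (by simp)] at hm
        have hpos := bse_snd_pos (a := k :: b) (by simp)
        exact ⟨le_trans (stp_lo (le_of_lt hpos) m) hm.1,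
          lt_of_lt_of_le hm.2 (stp_hi_le (le_of_lt hpos) m)⟩

lemma WS_locallyStrict : LocallyStrict WS := by
  refine ⟨WS_covering.2, ?_⟩
  intro a m k hmk
  cases a with
  | nil =>
    simp only [List.nil_append]
    rw [WS_single, WS_single]
    have hne : eZ m ≠ eZ k := fun h => hmk (eZ_injective h)
    ext x
    simp only [Set.mem_inter_iff, Set.mem_empty_iff_false, iff_false, not_and]
    intro hxm hxk
    rcases lt_trichotomy (eZ m) (eZ k) with h | h | h
    · have : (eZ m : ℝ) + 1 ≤ (eZ k : ℝ) := by exact_mod_cast Int.add_one_le_iff.2 h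
      have := hxm.2; have := hxk.1; linarith
    · exact hne h
    · have : (eZ k : ℝ) + 1 ≤ (eZ m : ℝ) := by exact_mod_cast Int.add_one_le_iff.2 h
      have := hxk.2; have := hxm.1; linarith
  | cons j b =>
    rw [WS_ne (a := (j :: b) ++ [m]) (by simp), WS_ne (a := (j :: b) ++ [k]) (by simp),
      bse_append_ne (by simp), bse_append_ne (by simp)]
    exact piece_disj (bse_snd_pos (a := j :: b) (by simp)) hmk
/-! ### The canonical map from Baire space to `ℝ` -/

/-- Left endpoint of a node. -/
def loN (a : List ℕ) : ℝ := (bse a).1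

/-- Right endpoint of a node. -/
def hiN (a : List ℕ) : ℝ := (bse a).1 + (bse a).2

/-- The point of a branch: supremum of the left endpoints. -/
def FF (q : ℕ → ℕ) : ℝ := ⨆ n, loN (restr q (n + 1))

lemma restr_ne_nil (q : ℕ → ℕ) (n : ℕ) : restr q (n + 1) ≠ [] := by
  intro h
  have := restr_length q (n + 1)
  rw [h] at this
  simp at this

lemma restr_succ' (q : ℕ → ℕ) (n : ℕ) :
    restr q (n + 1) = q 0 :: restr (fun i => q (i + 1)) n := by
  simp only [restr, List.range_succ_eq_map, List.map_cons, List.map_map]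
  rfl

lemma loN_le_succ (q : ℕ → ℕ) (n : ℕ) :
    loN (restr q (n + 1)) ≤ loN (restr q (n + 2)) := by
  rw [restr_succ q (n + 1), loN, loN, bse_append_ne (restr_ne_nil q n), stp_fst]
  nlinarith [pc_nonneg (q (n + 1)), bse_snd_pos (restr_ne_nil q n)]

lemma loN_mono (q : ℕ → ℕ) : Monotone fun n => loN (restr q (n + 1)) :=
  monotone_nat_of_le_succ (loN_le_succ q)

lemma hiN_succ_lt (q : ℕ → ℕ) (n : ℕ) :
    hiN (restr q (n + 2)) < hiN (restr q (n + 1)) := by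
  rw [restr_succ q (n + 1), hiN, hiN, bse_append_ne (restr_ne_nil q n), stp_hi]
  nlinarith [pc_lt_one (q (n + 1) + 1), bse_snd_pos (restr_ne_nil q n)]

lemma hiN_anti (q : ℕ → ℕ) {m n : ℕ} (h : m ≤ n) :
    hiN (restr q (n + 1)) ≤ hiN (restr q (m + 1)) := by
  induction n with
  | zero => have : m = 0 := Nat.le_zero.1 h; rw [this]
  | succ n ih =>
    rcases Nat.lt_or_ge m (n + 1) with h2 | h2
    · exact le_trans (le_of_lt (hiN_succ_lt q n)) (ih (Nat.lt_succ_iff.1 h2))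
    · have : m = n + 1 := le_antisymm h h2
      rw [this]

lemma loN_lt_hiN (q : ℕ → ℕ) (n m : ℕ) :
    loN (restr q (n + 1)) < hiN (restr q (m + 1)) := by
  rcases le_total n m with h | h
  · calc loN (restr q (n + 1)) ≤ loN (restr q (m + 1)) := loN_mono q (by omega)
      _ < hiN (restr q (m + 1)) := by
          rw [loN, hiN]; nlinarith [bse_snd_pos (restr_ne_nil q m)]
  · calc loN (restr q (n + 1)) < hiN (restr q (n + 1)) := by
          rw [loN, hiN]; nlinarith [bse_snd_pos (restr_ne_nil q n)]
      _ ≤ hiN (restr q (m + 1)) := hiN_anti q h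

lemma loN_bdd (q : ℕ → ℕ) : BddAbove (Set.range fun n => loN (restr q (n + 1))) := by
  refine ⟨hiN (restr q 1), ?_⟩
  rintro y ⟨n, rfl⟩
  exact le_of_lt (loN_lt_hiN q n 0)

lemma loN_le_FF (q : ℕ → ℕ) (n : ℕ) : loN (restr q (n + 1)) ≤ FF q :=
  le_ciSup (loN_bdd q) n

lemma FF_le_hiN (q : ℕ → ℕ) (n : ℕ) : FF q ≤ hiN (restr q (n + 1)) :=
  ciSup_le fun m => le_of_lt (loN_lt_hiN q m n)

lemma FF_lt_hiN (q : ℕ → ℕ) (n : ℕ) : FF q < hiN (restr q (n + 1)) :=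
  lt_of_le_of_lt (FF_le_hiN q (n + 1)) (hiN_succ_lt q n)

lemma FF_mem_WS (q : ℕ → ℕ) (n : ℕ) : FF q ∈ WS (restr q (n + 1)) := by
  rw [WS_ne (restr_ne_nil q n)]
  exact ⟨loN_le_FF q n, FF_lt_hiN q n⟩

lemma FF_mem_fruit (q : ℕ → ℕ) : FF q ∈ fruit WS q := by
  refine Set.mem_iInter.2 fun n => ?_
  cases n with
  | zero => simp [restr, WS]
  | succ n => exact FF_mem_WS q n

lemma bse_snd_le (q : ℕ → ℕ) (n : ℕ) : (bse (restr q (n + 1))).2 ≤ (2:ℝ)⁻¹ ^ n := by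
  rw [restr_succ', bse_cons]
  have := pos_snd_le (restr (fun i => q (i + 1)) n) (s := ((eZ (q 0) : ℝ), 1)) (by norm_num)
  simpa [restr_length] using this

lemma fruit_WS (q : ℕ → ℕ) : fruit WS q = {FF q} := by
  refine Set.eq_singleton_iff_unique_mem.2 ⟨FF_mem_fruit q, ?_⟩
  intro x hx
  have key : ∀ n : ℕ, |x - FF q| ≤ (2:ℝ)⁻¹ ^ n := by
    intro n
    have hx1 : x ∈ WS (restr q (n + 1)) := Set.mem_iInter.1 hx (n + 1)
    rw [WS_ne (restr_ne_nil q n)] at hx1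
    have hf1 := FF_mem_WS q n
    rw [WS_ne (restr_ne_nil q n)] at hf1
    have hw := bse_snd_le q n
    rw [abs_le]
    constructor
    · have := hf1.2; have := hx1.1; simp only [neg_le_sub_iff_le_add]; linarith
    · have := hx1.2; have := hf1.1; linarith
  have h2 : Filter.Tendsto (fun n : ℕ => (2:ℝ)⁻¹ ^ n) Filter.atTop (nhds 0) :=
    tendsto_pow_atTop_nhds_zero_of_lt_one (by norm_num) (by norm_num)
  have h3 : |x - FF q| ≤ 0 := ge_of_tendsto' h2 key
  have h4 : |x - FF q| = 0 := le_antisymm h3 (abs_nonneg _)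
  have := abs_eq_zero.1 h4
  linarith [sub_eq_zero.1 this]

lemma WS_strictBranches : StrictBranches WS := fun q => ⟨FF q, fruit_WS q⟩

lemma WS_complete : CompleteScheme WS := fun q => ⟨FF q, FF_mem_fruit q⟩

lemma FF_gdig (x : ℝ) : FF (gdig WS x) = x := by
  have hx : x ∈ fruit WS (gdig WS x) := gdig_mem_fruit WS_covering x
  rw [fruit_WS] at hx
  exact hx.symm

lemma FF_injective : Function.Injective FF := by
  intro p q h
  exact locallyStrict_unique_branch WS_locallyStrict (FF_mem_fruit p)
    (h ▸ FF_mem_fruit q)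

/-- Strict monotonicity of `FF` beyond the first coordinate. -/
lemma FF_lt {q p : ℕ → ℕ} {n : ℕ} (hn : 1 ≤ n) (hr : restr q n = restr p n)
    (hlt : q n < p n) : FF q < FF p := by
  obtain ⟨m, rfl⟩ : ∃ m, n = m + 1 := ⟨n - 1, by omega⟩
  have hane : restr q (m + 1) ≠ [] := restr_ne_nil q m
  have h1 : FF q < hiN (restr q (m + 2)) := FF_lt_hiN q (m + 1)
  have h2 : loN (restr p (m + 2)) ≤ FF p := loN_le_FF p (m + 1)
  have e1 : restr q (m + 2) = restr q (m + 1) ++ [q (m + 1)] := restr_succ q (m + 1)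
  have e2 : restr p (m + 2) = restr q (m + 1) ++ [p (m + 1)] := by
    rw [restr_succ p (m + 1), hr]
  have h3 : hiN (restr q (m + 2)) ≤ loN (restr p (m + 2)) := by
    rw [e1, e2, hiN, loN, bse_append_ne hane, bse_append_ne hane, stp_hi, stp_fst]
    have := pc_mono (show q (m + 1) + 1 ≤ p (m + 1) by omega)
    nlinarith [bse_snd_pos hane]
  linarith
/-! ### Cuts of the interval scheme -/

lemma mem_cut_iff {X : Type*} {V : List ℕ → Set X} {q : ℕ → ℕ} {n : ℕ} {x : X} :
    x ∈ cut V q n ↔ ∃ p ∈ rsequences q n, x ∈ fruit V p := by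
  simp [cut]

lemma cut_WS_succ (q : ℕ → ℕ) (n : ℕ) :
    cut WS q (n + 1) ∪ {FF q} = Set.Ico (FF q) (hiN (restr q (n + 1))) := by
  ext x
  constructor
  · rintro (hx | hx)
    · obtain ⟨p, hp, hxp⟩ := mem_cut_iff.1 hx
      rw [fruit_WS] at hxp
      rcases hxp with rfl
      obtain ⟨hr, k, hk, hkr, hklt⟩ := mem_rsequences_iff.1 hp
      refine ⟨le_of_lt (FF_lt (by omega) hkr hklt), ?_⟩
      have := FF_lt_hiN p n
      rwa [show restr p (n + 1) = restr q (n + 1) from hr.symm] at this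
    · rcases hx with rfl
      exact ⟨le_rfl, FF_lt_hiN q n⟩
  · rintro ⟨hx1, hx2⟩
    by_cases hxe : x = FF q
    · exact Or.inr hxe
    · left
      set p := gdig WS x with hp
      have hxfr : x ∈ fruit WS p := gdig_mem_fruit WS_covering x
      have hxF : x = FF p := by rw [hp, FF_gdig]
      have hxWq : x ∈ WS (restr q (n + 1)) := by
        rw [WS_ne (restr_ne_nil q n)]
        exact ⟨le_trans (loN_le_FF q n) hx1, hx2⟩
      have hxWp : x ∈ WS (restr p (n + 1)) := fruit_subset WS p (n + 1) hxfr
      have hnode : restr p (n + 1) = restr q (n + 1) :=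
        locallyStrict_unique_node WS_locallyStrict
          (by rw [restr_length, restr_length]) hxWp hxWq
      have hpq : p ≠ q := fun h => hxe (by rw [hxF, h])
      rcases tri_total hpq with htri | htri
      · -- tri p q : FF p < FF q, contradiction
        obtain ⟨k, hkr, hklt⟩ := htri
        have hk1 : n + 1 ≤ k := tri_witness_ge hnode hkr hklt
        have := FF_lt (q := p) (p := q) (by omega) hkr hklt
        rw [← hxF] at this
        exact absurd hx1 (not_le.2 this)
      · exact mem_cut_iff.2 ⟨p, ⟨htri, hnode.symm⟩, hxfr⟩

lemma restr_one (p : ℕ → ℕ) : restr p 1 = [p 0] := by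
  simp [restr, List.range_succ]

lemma cut_WS_zero (q : ℕ → ℕ) :
    cut WS q 0 = (⋃ k ∈ {k : ℕ | q 0 < k}, WS [k]) ∪ cut WS q 1 := by
  ext x
  constructor
  · intro hx
    obtain ⟨p, hp, hxp⟩ := mem_cut_iff.1 hx
    obtain ⟨⟨k, hkr, hklt⟩, -⟩ := hp
    cases k with
    | zero =>
      left
      refine Set.mem_biUnion (show q 0 < p 0 from hklt) ?_
      have := fruit_subset WS p 1 hxp
      rwa [restr_one] at this
    | succ j =>
      right
      have hr1 : restr q 1 = restr p 1 :=
        restr_eq_iff.2 fun i hi => restr_eq_iff.1 hkr i (by omega)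
      exact mem_cut_iff.2 ⟨p, ⟨⟨j + 1, hkr, hklt⟩, hr1⟩, hxp⟩
  · rintro (hx | hx)
    · obtain ⟨k, hk, hxk⟩ := Set.mem_iUnion₂.1 hx
      set p := gdig WS x with hp
      have hxfr : x ∈ fruit WS p := gdig_mem_fruit WS_covering x
      have hxWp : x ∈ WS (restr p 1) := fruit_subset WS p 1 hxfr
      have hnode : restr p 1 = [k] :=
        locallyStrict_unique_node WS_locallyStrict (by simp [restr_length]) hxWp hxk
      have hp0 : p 0 = k := by
        have := restr_one p ▸ hnode
        exact List.singleton_injective this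
      refine mem_cut_iff.2 ⟨p, ⟨⟨0, by simp [restr], by rw [hp0]; exact hk⟩, by simp [restr]⟩, hxfr⟩
    · obtain ⟨p, hp, hxp⟩ := mem_cut_iff.1 hx
      exact mem_cut_iff.2 ⟨p, rsequences_anti (by omega) hp, hxp⟩

/-! ### Openness and the neighborhood basis in the Sorgenfrey topology -/

lemma isOpen_S_Ico (a b : ℝ) : IsOpen[sorgenfreyTop] (Set.Ico a b) :=
  TopologicalSpace.GenerateOpen.basic _ ⟨a, b, rfl⟩

lemma WS_isOpen (a : List ℕ) : IsOpen[sorgenfreyTop] (WS a) := by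
  cases a with
  | nil => exact @isOpen_univ ℝ sorgenfreyTop
  | cons k b => exact isOpen_S_Ico _ _

lemma cut_WS_isOpen (q : ℕ → ℕ) (n : ℕ) :
    IsOpen[sorgenfreyTop] (cut WS q n ∪ {FF q}) := by
  letI : TopologicalSpace ℝ := sorgenfreyTop
  cases n with
  | zero =>
    rw [cut_WS_zero, Set.union_assoc]
    refine IsOpen.union ?_ ?_
    · exact isOpen_biUnion fun k _ => WS_isOpen [k]
    · rw [cut_WS_succ]
      exact isOpen_S_Ico _ _
  | succ n =>
    rw [cut_WS_succ]
    exact isOpen_S_Ico _ _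

lemma S_nhds_basis (x : ℝ) :
    (@nhds ℝ sorgenfreyTop x).HasBasis (fun b => x < b) (fun b => Set.Ico x b) := by
  constructor
  intro t
  have hS : @nhds ℝ sorgenfreyTop x =
      ⨅ s ∈ {s : Set ℝ | x ∈ s ∧ s ∈ {s : Set ℝ | ∃ a b : ℝ, s = Set.Ico a b}},
        Filter.principal s := by
    rw [sorgenfreyTop]
    exact @TopologicalSpace.nhds_generateFrom ℝ _ x
  have hdir : DirectedOn ((fun s => Filter.principal s) ⁻¹'o (· ≥ ·))
      {s : Set ℝ | x ∈ s ∧ s ∈ {s : Set ℝ | ∃ a b : ℝ, s = Set.Ico a b}} := by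
    rintro u ⟨hxu, a, b, rfl⟩ v ⟨hxv, c, d, rfl⟩
    refine ⟨Set.Ico (max a c) (min b d), ⟨⟨max_le hxu.1 hxv.1, lt_min hxu.2 hxv.2⟩,
      max a c, min b d, rfl⟩, ?_, ?_⟩
    · exact Filter.principal_mono.2 (Set.Ico_subset_Ico (le_max_left a c) (min_le_left b d))
    · exact Filter.principal_mono.2 (Set.Ico_subset_Ico (le_max_right a c) (min_le_right b d))
  have hne : Set.Nonempty {s : Set ℝ | x ∈ s ∧ s ∈ {s : Set ℝ | ∃ a b : ℝ, s = Set.Ico a b}} :=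
    ⟨Set.Ico x (x + 1), ⟨⟨le_rfl, by linarith⟩, x, x + 1, rfl⟩⟩
  rw [hS, Filter.mem_biInf_of_directed hdir hne]
  constructor
  · rintro ⟨s, ⟨hxs, a, b, rfl⟩, hst⟩
    exact ⟨b, hxs.2, fun y hy => hst ⟨le_trans hxs.1 hy.1, hy.2⟩⟩
  · rintro ⟨b, hb, hsub⟩
    exact ⟨Set.Ico x b, ⟨⟨le_rfl, hb⟩, x, b, rfl⟩, hsub⟩

lemma WS_baseBranch (q : ℕ → ℕ) : IsBaseBranch sorgenfreyTop WS q (FF q) := by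
  refine ⟨FF_mem_fruit q, cut_WS_isOpen q, ?_⟩
  constructor
  intro t
  constructor
  · intro ht
    obtain ⟨b, hb, hsub⟩ := (S_nhds_basis (FF q)).mem_iff.1 ht
    obtain ⟨n, hn⟩ := exists_pow_lt_of_lt_one (show (0:ℝ) < b - FF q by linarith)
      (show (2:ℝ)⁻¹ < 1 by norm_num)
    refine ⟨n + 1, trivial, ?_⟩
    rw [cut_WS_succ]
    refine subset_trans (Set.Ico_subset_Ico le_rfl ?_) hsub
    have h1 : loN (restr q (n + 1)) ≤ FF q := loN_le_FF q n
    have h2 := bse_snd_le q n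
    rw [hiN]
    rw [loN] at h1
    linarith
  · rintro ⟨m, -, hsub⟩
    have hmem : FF q ∈ cut WS q m ∪ {FF q} := Or.inr rfl
    have hopen := cut_WS_isOpen q m
    letI : TopologicalSpace ℝ := sorgenfreyTop
    exact Filter.mem_of_superset (IsOpen.mem_nhds hopen hmem) hsub

lemma WS_goodSys : GoodSys sorgenfreyTop WS := by
  refine ⟨WS_locallyStrict, WS_strictBranches, WS_covering, ?_⟩
  intro q x hx
  rw [fruit_WS] at hx
  rcases hx with rfl
  exact WS_baseBranch q

lemma WS_sorgenfreyBase : IsSorgenfreyBase sorgenfreyTop WS := by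
  refine ⟨WS_isOpen, WS_complete, WS_covering, ?_, ?_⟩
  · intro x q hq n
    have hx : x = FF q := by
      have := hq
      rw [branches, Set.mem_setOf_eq, fruit_WS] at this
      exact this
    exact ⟨q, by rw [hx]; exact WS_baseBranch q, rfl⟩
  · intro q
    exact ⟨FF q, WS_baseBranch q⟩
/-! ### Transport of a Sorgenfrey base along a homeomorphism -/

section Transport
variable {X Y : Type*} {τ : TopologicalSpace X} {σ : TopologicalSpace Y}

lemma fruit_preimage (f : X → Y) (U : List ℕ → Set Y) (p : ℕ → ℕ) :
    fruit (fun a => f ⁻¹' U a) p = f ⁻¹' fruit U p := by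
  simp [fruit, Set.preimage_iInter]

lemma cut_preimage (f : X → Y) (U : List ℕ → Set Y) (q : ℕ → ℕ) (n : ℕ) :
    cut (fun a => f ⁻¹' U a) q n = f ⁻¹' cut U q n := by
  ext x
  simp [mem_cut_iff, fruit_preimage]

lemma preimage_singleton_homeo (h : @Homeomorph X Y τ σ) (y : Y) :
    h.toEquiv ⁻¹' ({y} : Set Y) = {h.toEquiv.symm y} := by
  ext z
  simp only [Set.mem_preimage, Set.mem_singleton_iff]
  exact ⟨fun hz => by rw [← hz, Equiv.symm_apply_apply],
    fun hz => by rw [hz, Equiv.apply_symm_apply]⟩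

lemma isBaseBranch_transport (h : @Homeomorph X Y τ σ) {U : List ℕ → Set Y}
    {q : ℕ → ℕ} {y : Y} (hy : IsBaseBranch σ U q y) :
    IsBaseBranch τ (fun a => h.toEquiv ⁻¹' U a) q (h.toEquiv.symm y) := by
  letI := τ; letI := σ
  have hee : h.toEquiv (h.toEquiv.symm y) = y := h.toEquiv.apply_symm_apply y
  have hcut : ∀ m : ℕ, cut (fun a => h.toEquiv ⁻¹' U a) q m ∪ {h.toEquiv.symm y} =
      h.toEquiv ⁻¹' (cut U q m ∪ {y}) := by
    intro m
    rw [Set.preimage_union, cut_preimage, preimage_singleton_homeo]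
  refine ⟨?_, ?_, ?_⟩
  · rw [fruit_preimage, Set.mem_preimage, hee]
    exact hy.1
  · intro m
    rw [hcut m]
    exact (hy.2.1 m).preimage h.continuous
  · have hn : @nhds X τ (h.toEquiv.symm y) =
        Filter.comap h.toEquiv (@nhds Y σ y) := by
      have := h.isInducing.nhds_eq_comap (h.toEquiv.symm y)
      rw [show h (h.toEquiv.symm y) = y from hee] at this
      exact this
    rw [hn]
    have hb := (hy.2.2).comap (h.toEquiv : X → Y)
    refine hb.congr (fun m => Iff.rfl) (fun m _ => ?_)
    rw [hcut m]

lemma transport (h : @Homeomorph X Y τ σ) {U : List ℕ → Set Y}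
    (hb : IsSorgenfreyBase σ U) (hls : LocallyStrict U) (hsb : StrictBranches U) :
    IsSorgenfreyBase τ (fun a => h.toEquiv ⁻¹' U a) ∧
      LocallyStrict (fun a => h.toEquiv ⁻¹' U a) ∧
      StrictBranches (fun a => h.toEquiv ⁻¹' U a) := by
  letI := τ; letI := σ
  set e := h.toEquiv with he
  have hstr : StrictBranches (fun a => e ⁻¹' U a) := by
    intro p
    obtain ⟨y, hy⟩ := hsb p
    exact ⟨e.symm y, by rw [fruit_preimage, hy, preimage_singleton_homeo]⟩
  have hcov : Covering (fun a => e ⁻¹' U a) := by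
    constructor
    · show e ⁻¹' U [] = Set.univ
      rw [hb.2.2.1.1, Set.preimage_univ]
    · intro a
      show e ⁻¹' U a = ⋃ n, e ⁻¹' U (a ++ [n])
      conv_lhs => rw [hb.2.2.1.2 a]
      rw [Set.preimage_iUnion]
  have hloc : LocallyStrict (fun a => e ⁻¹' U a) := by
    constructor
    · exact hcov.2
    · intro a m k hmk
      show e ⁻¹' U (a ++ [m]) ∩ e ⁻¹' U (a ++ [k]) = ∅
      rw [← Set.preimage_inter, hls.2 a m k hmk, Set.preimage_empty]
  refine ⟨⟨?_, ?_, hcov, ?_, ?_⟩, hloc, hstr⟩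
  · intro a
    show IsOpen[τ] (e ⁻¹' U a)
    exact (hb.1 a).preimage h.continuous
  · intro q
    obtain ⟨y, hy⟩ := hstr q
    exact ⟨y, by rw [hy]; rfl⟩
  · -- S1
    intro x q hq n
    have hq' : e x ∈ fruit U q := by
      have : x ∈ fruit (fun a => e ⁻¹' U a) q := hq
      rw [fruit_preimage] at this
      exact this
    obtain ⟨t, htBB, htr⟩ := hb.2.2.2.1 (e x) q hq' n
    refine ⟨t, ?_, htr⟩
    have := isBaseBranch_transport h htBB
    rwa [show e.symm (e x) = x from e.symm_apply_apply x] at this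
  · -- S2
    intro q
    obtain ⟨z, hz⟩ := hb.2.2.2.2 q
    exact ⟨e.symm z, isBaseBranch_transport h hz⟩

end Transport
/-- A Hausdorff space has a locally strict Sorgenfrey base with strict branches
iff it is homeomorphic to the Sorgenfrey line; so the Sorgenfrey line is, up to
homeomorphism, the unique Hausdorff space with such a base. -/
theorem stmt8 {X : Type*} (τ : TopologicalSpace X) (hT2 : @T2Space X τ) :
    (∃ V : List ℕ → Set X, IsSorgenfreyBase τ V ∧ LocallyStrict V ∧ StrictBranches V) ↔
    Nonempty (@Homeomorph X ℝ τ sorgenfreyTop) := by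
  constructor
  · rintro ⟨V, hSB, hLS, hStr⟩
    have hGood : GoodSys τ V := by
      refine ⟨hLS, hStr, hSB.2.2.1, ?_⟩
      intro q x hx
      obtain ⟨t, htBB, -⟩ := hSB.2.2.2.1 x q (show q ∈ branches V x from hx) 0
      have htBB' : IsBaseBranch τ V t x := htBB
      have ht : t = q := locallyStrict_unique_branch hLS htBB'.1 hx
      rw [← ht]
      exact htBB'
    exact @goodSys_homeo X ℝ τ sorgenfreyTop V WS hGood WS_goodSys
  · rintro ⟨h⟩
    letI := τ
    letI : TopologicalSpace ℝ := sorgenfreyTop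
    obtain ⟨h1, h2, h3⟩ := @transport X ℝ τ sorgenfreyTop h WS WS_sorgenfreyBase WS_locallyStrict WS_strictBranches
    exact ⟨fun a => h.toEquiv ⁻¹' WS a, h1, h2, h3⟩
end
end

section
/- Let R be the strict lexicographic order on the double-arrow space. Then R is asymmetric and the double-arrow space is R-bidirected along itself (i.e., along the dense subset Q = the whole space). -/
open Set Filter Topology TopologicalSpace Function

noncomputable section

/-- The underlying set of the double-arrow space, as a subset of `ℝ ×ₗ Bool`
(with `false` playing the role of `0` and `true` the role of `1`). -/
def DASet : Set (ℝ ×ₗ Bool) :=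
  {x | (0 < (ofLex x).1 ∧ (ofLex x).1 ≤ 1 ∧ (ofLex x).2 = false) ∨
       (0 ≤ (ofLex x).1 ∧ (ofLex x).1 < 1 ∧ (ofLex x).2 = true)}

/-- The order topology on the double-arrow space, induced by the lexicographic order. -/
def DATop : TopologicalSpace ↥DASet := Preorder.topology ↥DASet

/-- An open neighborhood `U` of `x` is `R`-right along `Q`. -/
def RightNbhd {X : Type*} (τ : TopologicalSpace X) (Q : Set X) (R : X → X → Prop)
    (x : X) (U : Set X) : Prop :=
  IsOpen[τ] U ∧ x ∈ U ∧ ∀ y ∈ (U \ {x}) ∩ Q, R x y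

/-- An open neighborhood `U` of `x` is `R`-left along `Q`. -/
def LeftNbhd {X : Type*} (τ : TopologicalSpace X) (Q : Set X) (R : X → X → Prop)
    (x : X) (U : Set X) : Prop :=
  IsOpen[τ] U ∧ x ∈ U ∧ ∀ y ∈ (U \ {x}) ∩ Q, R y x

/-- The point `x` looks to the `R`-right along `Q`. -/
def LooksRight {X : Type*} (τ : TopologicalSpace X) (Q : Set X) (R : X → X → Prop)
    (x : X) : Prop :=
  (∃ U : Set X, RightNbhd τ Q R x U) ∧
  ∀ U : Set X, IsOpen[τ] U → x ∈ U →
    ∃ y ∈ (U \ {x}) ∩ Q, {z | R z y} ∈ @nhds X τ x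

/-- The point `x` looks to the `R`-left along `Q`. -/
def LooksLeft {X : Type*} (τ : TopologicalSpace X) (Q : Set X) (R : X → X → Prop)
    (x : X) : Prop :=
  (∃ U : Set X, LeftNbhd τ Q R x U) ∧
  ∀ U : Set X, IsOpen[τ] U → x ∈ U →
    ∃ y ∈ (U \ {x}) ∩ Q, {z | R y z} ∈ @nhds X τ x

/-- `(X, τ)` is `R`-bidirected along `Q`. -/
def Bidirected {X : Type*} (τ : TopologicalSpace X) (Q : Set X) (R : X → X → Prop) : Prop :=
  ∃ Al Ar : Set X, @Dense X τ Al ∧ @Dense X τ Ar ∧ Al ∪ Ar = Set.univ ∧ Al ∩ Ar = ∅ ∧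
    (∀ x ∈ Ar, LooksRight τ Q R x) ∧ (∀ x ∈ Al, LooksLeft τ Q R x)

namespace DA13

lemma mem_cases (x : ↥DASet) :
    (0 < (ofLex x.1).1 ∧ (ofLex x.1).1 ≤ 1 ∧ (ofLex x.1).2 = false) ∨
    (0 ≤ (ofLex x.1).1 ∧ (ofLex x.1).1 < 1 ∧ (ofLex x.1).2 = true) := x.2

lemma mem_mk {r : ℝ} {b : Bool}
    (h : (0 < r ∧ r ≤ 1 ∧ b = false) ∨ (0 ≤ r ∧ r < 1 ∧ b = true)) :
    toLex (r, b) ∈ DASet := h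

lemma lt_iff' {p q : ↥DASet} :
    p < q ↔ (ofLex p.1).1 < (ofLex q.1).1 ∨
      ((ofLex p.1).1 = (ofLex q.1).1 ∧ (ofLex p.1).2 = false ∧ (ofLex q.1).2 = true) := by
  constructor
  · intro h
    have h' : toLex (ofLex p.1) < toLex (ofLex q.1) := Subtype.coe_lt_coe.mpr h
    rcases Prod.Lex.lt_iff.mp h' with h1 | ⟨h1, h2⟩
    · exact Or.inl h1
    · exact Or.inr ⟨h1, Bool.lt_iff.mp h2⟩
  · intro h
    apply Subtype.coe_lt_coe.mp
    show toLex (ofLex p.1) < toLex (ofLex q.1)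
    rw [Prod.Lex.lt_iff]
    rcases h with h1 | ⟨h1, h2, h3⟩
    · exact Or.inl h1
    · exact Or.inr ⟨h1, by show (ofLex p.1).2 < (ofLex q.1).2; rw [h2, h3]; exact Bool.false_lt_true⟩

lemma eq_of_coords {p q : ↥DASet} (h1 : (ofLex p.1).1 = (ofLex q.1).1)
    (h2 : (ofLex p.1).2 = (ofLex q.1).2) : p = q := by
  apply Subtype.ext
  have : ofLex p.1 = ofLex q.1 := Prod.ext h1 h2
  exact ofLex_inj.mp this

lemma r_nonneg (x : ↥DASet) : 0 ≤ (ofLex x.1).1 := by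
  rcases mem_cases x with ⟨h, _⟩ | ⟨h, _⟩
  · exact h.le
  · exact h

lemma r_le_one (x : ↥DASet) : (ofLex x.1).1 ≤ 1 := by
  rcases mem_cases x with ⟨_, h, _⟩ | ⟨_, h, _⟩
  · exact h
  · exact h.le

lemma lt_mk {p : ↥DASet} {r : ℝ} {b : Bool} (h : _) (hr : (ofLex p.1).1 < r) :
    p < (⟨toLex (r, b), h⟩ : ↥DASet) := lt_iff'.mpr (Or.inl hr)

lemma mk_lt {p : ↥DASet} {r : ℝ} {b : Bool} (h : _) (hr : r < (ofLex p.1).1) :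
    (⟨toLex (r, b), h⟩ : ↥DASet) < p := lt_iff'.mpr (Or.inl hr)

/-- Between a true point and anything above it there is a false point. -/
lemma exists_false_between {x u : ↥DASet} (hb : (ofLex x.1).2 = true) (hxu : x < u) :
    ∃ w : ↥DASet, (ofLex w.1).2 = false ∧ x < w ∧ w < u := by
  have hru : (ofLex x.1).1 < (ofLex u.1).1 := by
    rcases lt_iff'.mp hxu with h | ⟨_, h2, _⟩
    · exact h
    · rw [hb] at h2; exact absurd h2 (by simp)
  set y : ℝ := ((ofLex x.1).1 + (ofLex u.1).1) / 2 with hy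
  have hxy : (ofLex x.1).1 < y := by rw [hy]; linarith
  have hyu : y < (ofLex u.1).1 := by rw [hy]; linarith
  have hy0 : 0 < y := lt_of_le_of_lt (r_nonneg x) hxy
  have hy1 : y ≤ 1 := le_of_lt (lt_of_lt_of_le hyu (r_le_one u))
  have hmem : toLex (y, false) ∈ DASet := mem_mk (Or.inl ⟨hy0, hy1, rfl⟩)
  exact ⟨⟨toLex (y, false), hmem⟩, rfl, lt_mk hmem hxy, mk_lt hmem hyu⟩

/-- Between a false point and anything below it there is a true point. -/
lemma exists_true_between {x l : ↥DASet} (hb : (ofLex x.1).2 = false) (hlx : l < x) :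
    ∃ w : ↥DASet, (ofLex w.1).2 = true ∧ l < w ∧ w < x := by
  have hrl : (ofLex l.1).1 < (ofLex x.1).1 := by
    rcases lt_iff'.mp hlx with h | ⟨_, _, h3⟩
    · exact h
    · rw [hb] at h3; exact absurd h3 (by simp)
  set y : ℝ := ((ofLex l.1).1 + (ofLex x.1).1) / 2 with hy
  have hly : (ofLex l.1).1 < y := by rw [hy]; linarith
  have hyx : y < (ofLex x.1).1 := by rw [hy]; linarith
  have hy0 : 0 ≤ y := le_of_lt (lt_of_le_of_lt (r_nonneg l) hly)
  have hy1 : y < 1 := lt_of_lt_of_le hyx (r_le_one x)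
  have hmem : toLex (y, true) ∈ DASet := mem_mk (Or.inr ⟨hy0, hy1, rfl⟩)
  exact ⟨⟨toLex (y, true), hmem⟩, rfl, lt_mk hmem hly, mk_lt hmem hyx⟩

lemma exists_gt_of_true {x : ↥DASet} (hb : (ofLex x.1).2 = true) : ∃ u : ↥DASet, x < u := by
  have hx1 : (ofLex x.1).1 < 1 := by
    rcases mem_cases x with ⟨_, _, h⟩ | ⟨_, h, _⟩
    · rw [hb] at h; exact absurd h (by simp)
    · exact h
  have hx0 := r_nonneg x
  have hmem : toLex (((ofLex x.1).1 + 1) / 2, true) ∈ DASet :=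
    mem_mk (Or.inr ⟨by linarith, by linarith, rfl⟩)
  exact ⟨⟨_, hmem⟩, lt_mk hmem (by linarith)⟩

lemma exists_lt_of_false {x : ↥DASet} (hb : (ofLex x.1).2 = false) : ∃ l : ↥DASet, l < x := by
  have hx0 : 0 < (ofLex x.1).1 := by
    rcases mem_cases x with ⟨h, _, _⟩ | ⟨_, _, h⟩
    · exact h
    · rw [hb] at h; exact absurd h (by simp)
  have hx1 := r_le_one x
  have hmem : toLex ((ofLex x.1).1 / 2, true) ∈ DASet :=
    mem_mk (Or.inr ⟨by linarith, by linarith, rfl⟩)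
  exact ⟨⟨_, hmem⟩, mk_lt hmem (by linarith)⟩

lemma fst_mk (r : ℝ) (b : Bool) (h : toLex (r, b) ∈ DASet) :
    (ofLex (⟨toLex (r, b), h⟩ : ↥DASet).1).1 = r := rfl

lemma snd_mk (r : ℝ) (b : Bool) (h : toLex (r, b) ∈ DASet) :
    (ofLex (⟨toLex (r, b), h⟩ : ↥DASet).1).2 = b := rfl

lemma Ici_open_of_true {x : ↥DASet} (hb : (ofLex x.1).2 = true) : IsOpen[DATop] (Ici x) := by
  letI := DATop
  haveI : OrderTopology ↥DASet := ⟨rfl⟩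
  rcases eq_or_lt_of_le (r_nonneg x) with h0 | h0
  · have : Ici x = univ := by
      ext z
      simp only [mem_Ici, mem_univ, iff_true]
      by_contra hzx
      rcases lt_iff'.mp (lt_of_not_ge hzx) with h | ⟨h1, h2, _⟩
      · exact absurd (lt_of_le_of_lt (r_nonneg z) h) (by rw [← h0]; exact lt_irrefl _)
      · rcases mem_cases z with ⟨hz, _, _⟩ | ⟨_, _, hz⟩
        · rw [h1, ← h0] at hz; exact lt_irrefl _ hz
        · rw [h2] at hz; exact absurd hz (by simp)
    rw [this]; exact isOpen_univ
  · have hmem : toLex ((ofLex x.1).1, false) ∈ DASet := mem_mk (Or.inl ⟨h0, r_le_one x, rfl⟩)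
    have : Ici x = Ioi (⟨toLex ((ofLex x.1).1, false), hmem⟩ : ↥DASet) := by
      ext z
      simp only [mem_Ici, mem_Ioi]
      constructor
      · intro h
        have h0' : (⟨toLex ((ofLex x.1).1, false), hmem⟩ : ↥DASet) < x :=
          lt_iff'.mpr (Or.inr ⟨fst_mk _ _ _, snd_mk _ _ _, hb⟩)
        exact lt_of_lt_of_le h0' h
      · intro h
        rcases lt_iff'.mp h with h | ⟨h1, _, h3⟩
        · rw [fst_mk] at h
          exact le_of_lt (lt_iff'.mpr (Or.inl h))
        · rw [fst_mk] at h1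
          exact le_of_eq (eq_of_coords h1 (by rw [h3, hb]))
    rw [this]; exact isOpen_Ioi

lemma Iic_open_of_false {x : ↥DASet} (hb : (ofLex x.1).2 = false) : IsOpen[DATop] (Iic x) := by
  letI := DATop
  haveI : OrderTopology ↥DASet := ⟨rfl⟩
  rcases eq_or_lt_of_le (r_le_one x) with h1 | h1
  · have : Iic x = univ := by
      ext z
      simp only [mem_Iic, mem_univ, iff_true]
      by_contra hxz
      rcases lt_iff'.mp (lt_of_not_ge hxz) with h | ⟨he, _, h3⟩
      · exact absurd (lt_of_lt_of_le h (r_le_one z)) (by rw [h1]; exact lt_irrefl _)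
      · rcases mem_cases z with ⟨_, _, hz⟩ | ⟨_, hz, _⟩
        · rw [h3] at hz; exact absurd hz (by simp)
        · rw [← he, h1] at hz; exact lt_irrefl _ hz
    rw [this]; exact isOpen_univ
  · have hmem : toLex ((ofLex x.1).1, true) ∈ DASet :=
      mem_mk (Or.inr ⟨r_nonneg x, h1, rfl⟩)
    have : Iic x = Iio (⟨toLex ((ofLex x.1).1, true), hmem⟩ : ↥DASet) := by
      ext z
      simp only [mem_Iic, mem_Iio]
      constructor
      · intro h
        have h1' : x < (⟨toLex ((ofLex x.1).1, true), hmem⟩ : ↥DASet) :=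
          lt_iff'.mpr (Or.inr ⟨(fst_mk _ _ _).symm, hb, snd_mk _ _ _⟩)
        exact lt_of_le_of_lt h h1'
      · intro h
        rcases lt_iff'.mp h with h | ⟨h1', h2', _⟩
        · rw [fst_mk] at h
          exact le_of_lt (lt_iff'.mpr (Or.inl h))
        · rw [fst_mk] at h1'
          exact le_of_eq (eq_of_coords h1' (by rw [h2', hb]))
    rw [this]; exact isOpen_Iio

lemma key_right {x : ↥DASet} (hb : (ofLex x.1).2 = true) {U : Set ↥DASet}
    (hU : IsOpen[DATop] U) (hx : x ∈ U) :
    ∃ w ∈ U, (ofLex w.1).2 = false ∧ x < w ∧ IsOpen[DATop] (Iio w) := by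
  letI := DATop
  haveI : OrderTopology ↥DASet := ⟨rfl⟩
  obtain ⟨u', hxu', hsub⟩ :=
    exists_Ico_subset_of_mem_nhds (hU.mem_nhds hx) (exists_gt_of_true hb)
  obtain ⟨w, hw, hxw, hwu⟩ := exists_false_between hb hxu'
  exact ⟨w, hsub ⟨hxw.le, hwu⟩, hw, hxw, isOpen_Iio⟩

lemma key_left {x : ↥DASet} (hb : (ofLex x.1).2 = false) {U : Set ↥DASet}
    (hU : IsOpen[DATop] U) (hx : x ∈ U) :
    ∃ w ∈ U, (ofLex w.1).2 = true ∧ w < x ∧ IsOpen[DATop] (Ioi w) := by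
  letI := DATop
  haveI : OrderTopology ↥DASet := ⟨rfl⟩
  obtain ⟨l', hl'x, hsub⟩ :=
    exists_Ioc_subset_of_mem_nhds (hU.mem_nhds hx) (exists_lt_of_false hb)
  obtain ⟨w, hw, hlw, hwx⟩ := exists_true_between hb hl'x
  exact ⟨w, hsub ⟨hlw, hwx.le⟩, hw, hwx, isOpen_Ioi⟩

end DA13

/-- The strict lexicographic order on the double-arrow space is asymmetric, and
the double-arrow space is bidirected with respect to it along itself. -/
theorem stmt13 :
    (∀ a b : ↥DASet, a < b → ¬ b < a) ∧
    Bidirected DATop Set.univ (fun a b : ↥DASet => a < b) := by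
  constructor
  · exact fun a b h => lt_asymm h
  · letI := DATop
    haveI : OrderTopology ↥DASet := ⟨rfl⟩
    refine ⟨{z : ↥DASet | (ofLex z.1).2 = false}, {z : ↥DASet | (ofLex z.1).2 = true},
      ?_, ?_, ?_, ?_, ?_, ?_⟩
    · rw [dense_iff_inter_open]
      rintro U hU ⟨x, hx⟩
      rcases Bool.eq_false_or_eq_true (ofLex x.1).2 with hb | hb
      · obtain ⟨w, hwU, hw, _, _⟩ := DA13.key_right hb hU hx
        exact ⟨w, hwU, hw⟩
      · exact ⟨x, hx, hb⟩
    · rw [dense_iff_inter_open]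
      rintro U hU ⟨x, hx⟩
      rcases Bool.eq_false_or_eq_true (ofLex x.1).2 with hb | hb
      · exact ⟨x, hx, hb⟩
      · obtain ⟨w, hwU, hw, _, _⟩ := DA13.key_left hb hU hx
        exact ⟨w, hwU, hw⟩
    · ext z
      simp only [Set.mem_union, Set.mem_setOf_eq, Set.mem_univ, iff_true]
      exact (Bool.eq_false_or_eq_true _).symm
    · ext z
      simp only [Set.mem_inter_iff, Set.mem_setOf_eq, Set.mem_empty_iff_false, iff_false,
        not_and]
      intro h1 h2
      rw [h1] at h2
      exact Bool.false_ne_true h2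
    · intro x hb
      constructor
      · exact ⟨Set.Ici x, DA13.Ici_open_of_true hb, Set.self_mem_Ici,
          fun y hy => lt_of_le_of_ne hy.1.1 (fun e => hy.1.2 e.symm)⟩
      · intro U hU hx
        obtain ⟨w, hwU, _, hxw, hIio⟩ := DA13.key_right hb hU hx
        exact ⟨w, ⟨⟨hwU, fun e => ne_of_gt hxw e⟩, trivial⟩, hIio.mem_nhds hxw⟩
    · intro x hb
      constructor
      · exact ⟨Set.Iic x, DA13.Iic_open_of_false hb, Set.self_mem_Iic,
          fun y hy => lt_of_le_of_ne hy.1.1 hy.1.2⟩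
      · intro U hU hx
        obtain ⟨w, hwU, _, hwx, hIoi⟩ := DA13.key_left hb hU hx
        exact ⟨w, ⟨⟨hwU, fun e => ne_of_lt hwx e⟩, trivial⟩, hIoi.mem_nhds hwx⟩
end
end

section
/- Let X be a topological space that is a continuous open image of the Sorgenfrey line (i.e., there is a continuous open surjection from the Sorgenfrey line onto X), and let F be a nonempty closed subset of X such that the subspace F has no isolated points. Then the subspace F is a continuous open image of the Sorgenfrey line. -/
open Set Filter Topology TopologicalSpace Function

noncomputable section

namespace Stmt17Aux

lemma sorgenfrey_isOpen_iff {s : Set ℝ} :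
    IsOpen[sorgenfreyTop] s ↔ ∀ x ∈ s, ∃ b, x < b ∧ Ico x b ⊆ s := by
  constructor
  · intro h
    induction h with
    | basic u hu =>
        rcases hu with ⟨a, b, rfl⟩
        intro x hx
        exact ⟨b, hx.2, fun y hy => ⟨le_trans hx.1 hy.1, hy.2⟩⟩
    | univ => intro x _; exact ⟨x + 1, by linarith, fun y _ => trivial⟩
    | inter u v hu hv ihu ihv =>
        intro x hx
        obtain ⟨b₁, hb₁, h₁⟩ := ihu x hx.1
        obtain ⟨b₂, hb₂, h₂⟩ := ihv x hx.2
        exact ⟨min b₁ b₂, lt_min hb₁ hb₂, fun y hy =>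
          ⟨h₁ ⟨hy.1, lt_of_lt_of_le hy.2 (min_le_left _ _)⟩,
           h₂ ⟨hy.1, lt_of_lt_of_le hy.2 (min_le_right _ _)⟩⟩⟩
    | sUnion S hS ih =>
        intro x hx
        obtain ⟨u, huS, hxu⟩ := hx
        obtain ⟨b, hb, hsub⟩ := ih u huS x hxu
        exact ⟨b, hb, fun y hy => ⟨u, huS, hsub hy⟩⟩
  · intro h
    choose b hb hsub using h
    letI : TopologicalSpace ℝ := sorgenfreyTop
    have : s = ⋃ x : s, Ico (x : ℝ) (b x x.2) := by
      ext y
      constructor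
      · intro hy
        exact mem_iUnion.2 ⟨⟨y, hy⟩, le_refl y, hb y hy⟩
      · intro hy
        obtain ⟨x, hx⟩ := mem_iUnion.1 hy
        exact hsub x x.2 hx
    rw [this]
    exact isOpen_iUnion fun x => TopologicalSpace.GenerateOpen.basic _ ⟨x, _, rfl⟩

lemma isOpen_Ico' (a b : ℝ) : IsOpen[sorgenfreyTop] (Ico a b) :=
  TopologicalSpace.GenerateOpen.basic _ ⟨a, b, rfl⟩

lemma isOpen_Ici' (a : ℝ) : IsOpen[sorgenfreyTop] (Ici a) :=
  sorgenfrey_isOpen_iff.2 fun x hx => ⟨x + 1, by linarith, fun y hy => le_trans hx hy.1⟩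

end Stmt17Aux


namespace Stmt17Aux

lemma exists_param (D : Set ℝ) (d : ℝ) (hd : d ∈ D) (hdmin : ∀ y ∈ D, d ≤ y)
    (hcl : ∀ x : ℝ, (∀ ε > 0, (D ∩ Ico x (x + ε)).Nonempty) → x ∈ D)
    (hri : ∀ c ∈ D, ∀ ε > 0, (D ∩ Ioo c (c + ε)).Nonempty) :
    ∃ Ψ : ℝ → ℝ,
      (∀ t ∈ Ico (0:ℝ) 1, Ψ t ∈ D) ∧
      (∀ c ∈ D, ∃ t ∈ Ico (0:ℝ) 1, Ψ t = c) ∧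
      (∀ t ∈ Ico (0:ℝ) 1, ∀ t' ∈ Ico (0:ℝ) 1, t < t' → Ψ t < Ψ t') ∧
      (∀ t ∈ Ico (0:ℝ) 1, ∀ t' ∈ Ico (0:ℝ) 1, t < t' →
        Ψ '' (Ico t t') = D ∩ Ico (Ψ t) (Ψ t')) ∧
      (∀ t ∈ Ico (0:ℝ) 1, Ψ '' (Ico t 1) = D ∩ Ici (Ψ t)) := by
  classical
  -- attained infima
  have hmin : ∀ x : ℝ, (D ∩ Ici x).Nonempty →
      sInf (D ∩ Ici x) ∈ D ∧ x ≤ sInf (D ∩ Ici x) ∧ ∀ y ∈ D ∩ Ici x, sInf (D ∩ Ici x) ≤ y := by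
    intro x hne
    have hbdd : BddBelow (D ∩ Ici x) := ⟨x, fun y hy => hy.2⟩
    have hle : ∀ y ∈ D ∩ Ici x, sInf (D ∩ Ici x) ≤ y := fun y hy => csInf_le hbdd hy
    have hge : x ≤ sInf (D ∩ Ici x) := le_csInf hne fun y hy => hy.2
    refine ⟨hcl _ ?_, hge, hle⟩
    intro ε hε
    obtain ⟨a, ha, hlt⟩ := Real.lt_sInf_add_pos hne hε
    exact ⟨a, ha.1, hle a ha, hlt⟩
  -- countable weakly dense set
  set Qd : Set ℝ := ((Set.range fun r : ℚ => sInf (D ∩ Ici (r : ℝ))) ∩ D) ∩ Ioi d with hQdDef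
  have hQdsub : Qd ⊆ D := fun q hq => hq.1.2
  have hQdgt : ∀ q ∈ Qd, d < q := fun q hq => hq.2
  have hQdcnt : Qd.Countable :=
    Set.Countable.mono (fun q hq => hq.1.1) (Set.countable_range _)
  have hQdense : ∀ c ∈ D, ∀ v, c < v → ∃ q ∈ Qd, c < q ∧ q < v := by
    intro c hc v hv
    obtain ⟨c', hc'⟩ := hri c hc (v - c) (by linarith)
    have hc'D : c' ∈ D := hc'.1
    have hcc' : c < c' := hc'.2.1
    have hc'v : c' < v := by have := hc'.2.2; linarith
    obtain ⟨r, hr1, hr2⟩ := exists_rat_btwn hcc'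
    have hne : (D ∩ Ici (r : ℝ)).Nonempty := ⟨c', hc'D, le_of_lt hr2⟩
    obtain ⟨hmem, hge, hle⟩ := hmin r hne
    refine ⟨sInf (D ∩ Ici (r : ℝ)), ⟨⟨⟨r, rfl⟩, hmem⟩, ?_⟩, lt_of_lt_of_le hr1 hge, ?_⟩
    · exact lt_of_le_of_lt (hdmin c hc) (lt_of_lt_of_le hr1 hge)
    · exact lt_of_le_of_lt (hle c' ⟨hc'D, le_of_lt hr2⟩) hc'v
  -- order instances on Qd
  haveI : Nonempty ↥Qd := by
    obtain ⟨q, hq, _, _⟩ := hQdense d hd (d + 1) (by linarith)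
    exact ⟨⟨q, hq⟩⟩
  haveI : Countable ↥Qd := hQdcnt.to_subtype
  haveI : DenselyOrdered ↥Qd := by
    constructor
    rintro ⟨a, ha⟩ ⟨b, hb⟩ hab
    have hab' : a < b := hab
    obtain ⟨c', hc'⟩ := hri a (hQdsub ha) (b - a) (by linarith)
    have h2 : c' < b := by have := hc'.2.2; linarith
    obtain ⟨q, hq, hq1, hq2⟩ := hQdense c' hc'.1 b h2
    exact ⟨⟨q, hq⟩, show a < q from hc'.2.1.trans hq1, show q < b from hq2⟩
  haveI : NoMaxOrder ↥Qd := by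
    constructor
    rintro ⟨a, ha⟩
    obtain ⟨q, hq, hq1, _⟩ := hQdense a (hQdsub ha) (a + 1) (by linarith)
    exact ⟨⟨q, hq⟩, hq1⟩
  haveI : NoMinOrder ↥Qd := by
    constructor
    rintro ⟨a, ha⟩
    have hda : d < a := hQdgt a ha
    obtain ⟨c', hc'⟩ := hri d hd (a - d) (by linarith)
    have h2 : c' < a := by have := hc'.2.2; linarith
    obtain ⟨q, hq, _, hq2⟩ := hQdense c' hc'.1 a h2
    exact ⟨⟨q, hq⟩, hq2⟩
  -- order instances on rational interval
  haveI : Nonempty ↥(Set.Ioo (0 : ℚ) 1) := ⟨⟨1/2, by norm_num, by norm_num⟩⟩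
  haveI : NoMaxOrder ↥(Set.Ioo (0 : ℚ) 1) := by
    constructor
    rintro ⟨a, ha1, ha2⟩
    obtain ⟨b, hb1, hb2⟩ := exists_between ha2
    exact ⟨⟨b, ha1.trans hb1, hb2⟩, hb1⟩
  haveI : NoMinOrder ↥(Set.Ioo (0 : ℚ) 1) := by
    constructor
    rintro ⟨a, ha1, ha2⟩
    obtain ⟨b, hb1, hb2⟩ := exists_between ha1
    exact ⟨⟨b, hb1, hb2.trans ha2⟩, hb2⟩
  obtain ⟨e⟩ : Nonempty (↥Qd ≃o ↥(Set.Ioo (0 : ℚ) 1)) := Order.iso_of_countable_dense _ _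
  -- the rational labelling
  set φ : ℝ → ℝ := fun c => if h : c ∈ Qd then (((e ⟨c, h⟩ : ↥(Set.Ioo (0:ℚ) 1)) : ℚ) : ℝ) else 0
    with hφdef
  set Qf : Set ℝ := insert d Qd with hQfdef
  have hdQf : d ∈ Qf := mem_insert _ _
  have hφd : φ d = 0 := by
    have hdn : d ∉ Qd := fun h => lt_irrefl d (hQdgt d h)
    simp only [hφdef, dif_neg hdn]
  have hφval : ∀ (q : ℝ) (h : q ∈ Qd), φ q = (((e ⟨q, h⟩ : ↥(Set.Ioo (0:ℚ) 1)) : ℚ) : ℝ) := by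
    intro q h
    simp only [hφdef, dif_pos h]
  have hφpos : ∀ q ∈ Qd, 0 < φ q ∧ φ q < 1 := by
    intro q hq
    rw [hφval q hq]
    have h2 := (e ⟨q, hq⟩).2
    constructor
    · exact_mod_cast h2.1
    · exact_mod_cast h2.2
  have hφmem : ∀ q ∈ Qf, 0 ≤ φ q ∧ φ q < 1 := by
    intro q hq
    rcases eq_or_mem_of_mem_insert hq with rfl | hq'
    · rw [hφd]; norm_num
    · exact ⟨le_of_lt (hφpos q hq').1, (hφpos q hq').2⟩
  have hφmono : ∀ q ∈ Qf, ∀ q' ∈ Qf, q < q' → φ q < φ q' := by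
    intro q hq q' hq' hlt
    rcases eq_or_mem_of_mem_insert hq with rfl | hq1
    · rcases eq_or_mem_of_mem_insert hq' with rfl | hq2
      · exact absurd hlt (lt_irrefl _)
      · rw [hφd]; exact (hφpos q' hq2).1
    · have hq2 : q' ∈ Qd := by
        rcases eq_or_mem_of_mem_insert hq' with rfl | h
        · exact absurd ((hQdgt q hq1).trans hlt) (lt_irrefl _)
        · exact h
      rw [hφval q hq1, hφval q' hq2]
      have hsub : (⟨q, hq1⟩ : ↥Qd) < ⟨q', hq2⟩ := hlt
      have := e.strictMono hsub
      exact_mod_cast this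
  have hφsurj : ∀ r : ℚ, 0 < r → r < 1 → ∃ q ∈ Qd, φ q = (r : ℝ) := by
    intro r h0 h1
    set q₀ : ↥Qd := e.symm ⟨r, h0, h1⟩ with hq₀def
    refine ⟨(q₀ : ℝ), q₀.2, ?_⟩
    rw [hφval _ q₀.2]
    have : (⟨(q₀ : ℝ), q₀.2⟩ : ↥Qd) = q₀ := Subtype.ext rfl
    rw [this, hq₀def, e.apply_symm_apply]
  -- the parametrization of D
  set Φ : ℝ → ℝ := fun c => sInf (φ '' (Qf ∩ Ici c)) with hΦdef
  have hQfne : ∀ c ∈ D, (Qf ∩ Ici c).Nonempty := by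
    intro c hc
    obtain ⟨q, hq, h1, _⟩ := hQdense c hc (c + 1) (by linarith)
    exact ⟨q, mem_insert_of_mem _ hq, le_of_lt h1⟩
  have himgne : ∀ c ∈ D, (φ '' (Qf ∩ Ici c)).Nonempty := fun c hc => (hQfne c hc).image _
  have hbddφ : ∀ c : ℝ, BddBelow (φ '' (Qf ∩ Ici c)) := by
    intro c
    refine ⟨0, ?_⟩
    rintro y ⟨q, hq, rfl⟩
    exact (hφmem q hq.1).1
  have hΦle : ∀ c : ℝ, ∀ q ∈ Qf, c ≤ q → Φ c ≤ φ q := fun c q hq hcq =>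
    csInf_le (hbddφ c) ⟨q, ⟨hq, hcq⟩, rfl⟩
  have hΦmem : ∀ c ∈ D, 0 ≤ Φ c ∧ Φ c < 1 := by
    intro c hc
    constructor
    · exact le_csInf (himgne c hc) (by rintro y ⟨q, hq, rfl⟩; exact (hφmem q hq.1).1)
    · obtain ⟨q, hq⟩ := hQfne c hc
      exact lt_of_le_of_lt (hΦle c q hq.1 hq.2) (hφmem q hq.1).2
  have hΦmono : ∀ c ∈ D, ∀ c' ∈ D, c < c' → Φ c < Φ c' := by
    intro c hc c' hc' hlt
    obtain ⟨q, hq, hq1, hq2⟩ := hQdense c hc c' hlt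
    obtain ⟨ct, hct⟩ := hri q (hQdsub hq) (c' - q) (by linarith)
    have h1 : q < ct := hct.2.1
    have h2 : ct < c' := by have := hct.2.2; linarith
    obtain ⟨qt, hqt, hqt1, hqt2⟩ := hQdense ct hct.1 c' h2
    have step1 : Φ c ≤ φ q := hΦle c q (mem_insert_of_mem _ hq) (le_of_lt hq1)
    have step2 : φ q < φ qt :=
      hφmono q (mem_insert_of_mem _ hq) qt (mem_insert_of_mem _ hqt) (h1.trans hqt1)
    have step3 : φ qt ≤ Φ c' := by
      apply le_csInf (himgne c' hc')
      rintro y ⟨q', hq', rfl⟩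
      rcases eq_or_lt_of_le (hqt2.le.trans hq'.2) with h | h
      · exact le_of_eq (by rw [h])
      · exact le_of_lt (hφmono qt (mem_insert_of_mem _ hqt) q' hq'.1 h)
    linarith
  have hΦd : Φ d = 0 := by
    apply le_antisymm
    · rw [← hφd]; exact hΦle d d hdQf le_rfl
    · exact (hΦmem d hd).1
  have hΦsurj : ∀ t : ℝ, 0 ≤ t → t < 1 → ∃ c, c ∈ D ∧ Φ c = t := by
    intro t ht0 ht1
    rcases eq_or_lt_of_le ht0 with h | htpos
    · exact ⟨d, hd, by rw [hΦd, h]⟩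
    · set S : Set ℝ := {q | q ∈ Qd ∧ t ≤ φ q} with hSdef
      have hSQd : ∀ s ∈ S, s ∈ Qd := fun s hs => hs.1
      have hSne : S.Nonempty := by
        obtain ⟨r, hr1, hr2⟩ := exists_rat_btwn ht1
        have hr0 : 0 < r := by exact_mod_cast htpos.trans hr1
        obtain ⟨q, hq, hφq⟩ := hφsurj r hr0 (by exact_mod_cast hr2)
        exact ⟨q, hq, by rw [hφq]; exact le_of_lt hr1⟩
      have hSbdd : BddBelow S := ⟨d, fun q hq => le_of_lt (hQdgt q (hSQd q hq))⟩
      set c := sInf S with hcdef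
      have hcS : ∀ s ∈ S, c ≤ s := fun s hs => csInf_le hSbdd hs
      have hcD : c ∈ D := by
        apply hcl
        intro ε hε
        obtain ⟨a, ha, hlt⟩ := Real.lt_sInf_add_pos hSne hε
        exact ⟨a, hQdsub (hSQd a ha), hcS a ha, hlt⟩
      refine ⟨c, hcD, ?_⟩
      have hlb : ∀ q ∈ Qf, φ q < t → q ≤ c := by
        intro q hq hlt
        refine le_csInf hSne fun s hs => ?_
        rcases lt_trichotomy q s with h | h | h
        · exact le_of_lt h
        · exact le_of_eq h
        · exfalso
          have h1 := hφmono s (mem_insert_of_mem _ (hSQd s hs)) q hq h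
          have h2 := hs.2
          linarith
      have hlow : ∀ q ∈ Qf, c ≤ q → t ≤ φ q := by
        intro q hq hcq
        by_contra hcon
        push_neg at hcon
        have hqc : q = c := le_antisymm (hlb q hq hcon) hcq
        obtain ⟨r, hr1, hr2⟩ := exists_rat_btwn hcon
        have hr0 : 0 < r := by
          have := (hφmem q hq).1
          exact_mod_cast lt_of_le_of_lt this hr1
        have hr1' : r < 1 := by exact_mod_cast hr2.trans ht1
        obtain ⟨q', hq'Qd, hφq'⟩ := hφsurj r hr0 hr1'
        have h1 : q' ≤ c := hlb q' (mem_insert_of_mem _ hq'Qd) (by rw [hφq']; exact_mod_cast hr2)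
        have h2 : φ q < φ q' := by rw [hφq']; exact_mod_cast hr1
        rcases lt_trichotomy q q' with h | h | h
        · rw [hqc] at h; linarith
        · rw [h] at h2; exact lt_irrefl _ h2
        · have := hφmono q' (mem_insert_of_mem _ hq'Qd) q hq h
          linarith
      apply le_antisymm
      · apply le_of_forall_pos_le_add
        intro ε hε
        have hmin' : t < min (t + ε) 1 := lt_min (by linarith) ht1
        obtain ⟨r, hr1, hr2⟩ := exists_rat_btwn hmin'
        have hrt : (t : ℝ) < r := hr1
        have hr0 : 0 < r := by exact_mod_cast htpos.trans hrt
        have hr1' : r < 1 := by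
          have : (r : ℝ) < 1 := lt_of_lt_of_le hr2 (min_le_right _ _)
          exact_mod_cast this
        obtain ⟨q, hqQd, hφq⟩ := hφsurj r hr0 hr1'
        have hqS : q ∈ S := ⟨hqQd, by rw [hφq]; exact le_of_lt hrt⟩
        have : Φ c ≤ φ q := hΦle c q (mem_insert_of_mem _ hqQd) (hcS q hqS)
        rw [hφq] at this
        have h2 : (r : ℝ) ≤ t + ε := le_of_lt (lt_of_lt_of_le hr2 (min_le_left _ _))
        linarith
      · exact le_csInf (himgne c hcD) (by rintro y ⟨q, hq, rfl⟩; exact hlow q hq.1 hq.2)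
  -- the inverse map
  set Ψ : ℝ → ℝ := fun t => if h : ∃ c, c ∈ D ∧ Φ c = t then h.choose else d with hΨdef
  have hΨspec : ∀ t : ℝ, 0 ≤ t → t < 1 → Ψ t ∈ D ∧ Φ (Ψ t) = t := by
    intro t h0 h1
    have hex : ∃ c, c ∈ D ∧ Φ c = t := hΦsurj t h0 h1
    have : Ψ t = hex.choose := by simp only [hΨdef, dif_pos hex]
    rw [this]
    exact hex.choose_spec
  have hΨΦ : ∀ c ∈ D, Ψ (Φ c) = c := by
    intro c hc
    obtain ⟨h0, h1⟩ := hΦmem c hc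
    obtain ⟨hD, hE⟩ := hΨspec (Φ c) h0 h1
    rcases lt_trichotomy (Ψ (Φ c)) c with h | h | h
    · have := hΦmono _ hD _ hc h
      rw [hE] at this
      exact absurd this (lt_irrefl _)
    · exact h
    · have := hΦmono _ hc _ hD h
      rw [hE] at this
      exact absurd this (lt_irrefl _)
  have hmono : ∀ t : ℝ, 0 ≤ t → t < 1 → ∀ t' : ℝ, 0 ≤ t' → t' < 1 → t < t' → Ψ t < Ψ t' := by
    intro t h0 h1 t' h0' h1' hlt
    obtain ⟨hD, hE⟩ := hΨspec t h0 h1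
    obtain ⟨hD', hE'⟩ := hΨspec t' h0' h1'
    rcases lt_trichotomy (Ψ t) (Ψ t') with h | h | h
    · exact h
    · exfalso; rw [h, hE'] at hE; exact absurd hE (ne_of_gt hlt)
    · exfalso
      have := hΦmono _ hD' _ hD h
      rw [hE, hE'] at this
      linarith
  have himg : ∀ t : ℝ, 0 ≤ t → t < 1 → ∀ t' : ℝ, t < t' → t' ≤ 1 →
      Ψ '' (Ico t t') = {z | z ∈ D ∧ Ψ t ≤ z ∧ Φ z < t'} := by
    intro t h0 h1 t' htt' ht'1
    ext z
    constructor
    · rintro ⟨s, ⟨hs1, hs2⟩, rfl⟩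
      have hs0 : 0 ≤ s := le_trans h0 hs1
      have hs1' : s < 1 := lt_of_lt_of_le hs2 ht'1
      obtain ⟨hD, hE⟩ := hΨspec s hs0 hs1'
      refine ⟨hD, ?_, by rw [hE]; exact hs2⟩
      rcases eq_or_lt_of_le hs1 with h | h
      · exact le_of_eq (by rw [h])
      · exact le_of_lt (hmono t h0 h1 s hs0 hs1' h)
    · rintro ⟨hzD, hz1, hz2⟩
      refine ⟨Φ z, ⟨?_, hz2⟩, hΨΦ z hzD⟩
      obtain ⟨hD, hE⟩ := hΨspec t h0 h1
      rcases eq_or_lt_of_le hz1 with h | h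
      · rw [← h, hE]
      · have := hΦmono _ hD _ hzD h
        rw [hE] at this
        exact le_of_lt this
  refine ⟨Ψ, ?_, ?_, ?_, ?_, ?_⟩
  · intro t ht
    exact (hΨspec t ht.1 ht.2).1
  · intro c hc
    exact ⟨Φ c, ⟨(hΦmem c hc).1, (hΦmem c hc).2⟩, hΨΦ c hc⟩
  · intro t ht t' ht' h
    exact hmono t ht.1 ht.2 t' ht'.1 ht'.2 h
  · intro t ht t' ht' h
    rw [himg t ht.1 ht.2 t' h (le_of_lt ht'.2)]
    obtain ⟨hD', hE'⟩ := hΨspec t' ht'.1 ht'.2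
    ext z
    constructor
    · rintro ⟨hD, h1, h2⟩
      refine ⟨hD, h1, ?_⟩
      rcases lt_trichotomy z (Ψ t') with h3 | h3 | h3
      · exact h3
      · exfalso; rw [h3, hE'] at h2; exact lt_irrefl _ h2
      · exfalso
        have := hΦmono _ hD' _ hD h3
        rw [hE'] at this
        linarith
    · rintro ⟨hD, h1, h2⟩
      refine ⟨hD, h1, ?_⟩
      have := hΦmono _ hD _ hD' h2
      rw [hE'] at this
      exact this
  · intro t ht
    rw [himg t ht.1 ht.2 1 ht.2 le_rfl]
    ext z
    constructor
    · rintro ⟨hD, h1, _⟩; exact ⟨hD, h1⟩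
    · rintro ⟨hD, h1⟩; exact ⟨hD, h1, (hΦmem z hD).2⟩

end Stmt17Aux


namespace Stmt17Aux

lemma sorgenfrey_onto_closed (C : Set ℝ) (hCne : C.Nonempty)
    (hclC : ∀ x : ℝ, (∀ ε > 0, (C ∩ Ico x (x + ε)).Nonempty) → x ∈ C)
    (hriC : ∀ c ∈ C, ∀ ε > 0, (C ∩ Ioo c (c + ε)).Nonempty) :
    ∃ g0 : ℝ → ↥C,
      @Continuous ℝ ↥C sorgenfreyTop (TopologicalSpace.induced Subtype.val sorgenfreyTop) g0 ∧
      @IsOpenMap ℝ ↥C sorgenfreyTop (TopologicalSpace.induced Subtype.val sorgenfreyTop) g0 ∧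
      Function.Surjective g0 := by
  classical
  letI : TopologicalSpace ℝ := sorgenfreyTop
  obtain ⟨c₀, hc₀C⟩ := hCne
  -- pointed tails of C
  have hDkex : ∀ k : ℕ, ∃ dk : ℝ, dk ∈ C ∧ (∀ y ∈ C, c₀ - k ≤ y → dk ≤ y) ∧ c₀ - k ≤ dk := by
    intro k
    have hne' : (C ∩ Ici (c₀ - k)).Nonempty :=
      ⟨c₀, hc₀C, by simp only [mem_Ici]; linarith [Nat.cast_nonneg (α := ℝ) k]⟩
    have hbdd : BddBelow (C ∩ Ici (c₀ - k)) := ⟨c₀ - k, fun y hy => hy.2⟩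
    refine ⟨sInf (C ∩ Ici (c₀ - k)), ?_, ?_, ?_⟩
    · apply hclC
      intro ε hε
      obtain ⟨a, ha, hlt⟩ := Real.lt_sInf_add_pos hne' hε
      exact ⟨a, ha.1, csInf_le hbdd ha, hlt⟩
    · intro y hy hy2
      exact csInf_le hbdd ⟨hy, hy2⟩
    · exact le_csInf hne' fun y hy => hy.2
  choose dk hdkC hdkmin hdkge using hDkex
  set Dk : ℕ → Set ℝ := fun k => C ∩ Ici (dk k) with hDkdef
  have hDsub : ∀ k, Dk k ⊆ C := fun k q hq => hq.1
  have hparam : ∀ k : ℕ, ∃ Ψ : ℝ → ℝ,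
      (∀ t ∈ Ico (0:ℝ) 1, Ψ t ∈ Dk k) ∧
      (∀ c ∈ Dk k, ∃ t ∈ Ico (0:ℝ) 1, Ψ t = c) ∧
      (∀ t ∈ Ico (0:ℝ) 1, ∀ t' ∈ Ico (0:ℝ) 1, t < t' → Ψ t < Ψ t') ∧
      (∀ t ∈ Ico (0:ℝ) 1, ∀ t' ∈ Ico (0:ℝ) 1, t < t' →
        Ψ '' (Ico t t') = Dk k ∩ Ico (Ψ t) (Ψ t')) ∧
      (∀ t ∈ Ico (0:ℝ) 1, Ψ '' (Ico t 1) = Dk k ∩ Ici (Ψ t)) := by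
    intro k
    apply exists_param (Dk k) (dk k) ⟨hdkC k, Set.mem_Ici.2 le_rfl⟩ (fun y hy => hy.2)
    · intro x hx
      have hxC : x ∈ C := hclC x fun ε hε => ((hx ε hε).imp fun y hy => ⟨hy.1.1, hy.2⟩)
      refine ⟨hxC, ?_⟩
      by_contra hcon
      obtain ⟨y, hy⟩ := hx (dk k - x) (by simp only [mem_Ici] at hcon; linarith)
      have h1 : dk k ≤ y := hy.1.2
      have h2 : y < x + (dk k - x) := hy.2.2
      linarith
    · intro c hcD ε hε
      obtain ⟨y, hy⟩ := hriC c (hDsub k hcD) ε hε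
      exact ⟨y, ⟨hy.1, le_trans hcD.2 (le_of_lt hy.2.1)⟩, hy.2⟩
  choose Ψ hmem hsurj hmono himg1 himg2 using hparam
  -- the global map
  set k0 : ℝ → ℕ := fun x => (⌊x⌋).natAbs with hk0def
  set g0 : ℝ → ℝ := fun x => Ψ (k0 x) (Int.fract x) with hg0def
  have hfract : ∀ x : ℝ, Int.fract x ∈ Ico (0:ℝ) 1 :=
    fun x => ⟨Int.fract_nonneg x, Int.fract_lt_one x⟩
  have hfx : ∀ u : ℝ, Int.fract u = u - ⌊u⌋ := fun u => (Int.self_sub_floor u).symm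
  have hg0D : ∀ x, g0 x ∈ Dk (k0 x) := fun x => hmem _ _ (hfract x)
  have hg0mem : ∀ x, g0 x ∈ C := fun x => (hg0D x).1
  have hfloor_eq : ∀ x y : ℝ, x ≤ y → y < ⌊x⌋ + 1 → ⌊y⌋ = ⌊x⌋ := by
    intro x y h1 h2
    exact Int.floor_eq_iff.2 ⟨le_trans (Int.floor_le x) h1, h2⟩
  have hpiece : ∀ x b : ℝ, x < b → b ≤ ⌊x⌋ + 1 →
      g0 '' (Ico x b) = Ψ (k0 x) '' (Ico (Int.fract x) (Int.fract x + (b - x))) := by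
    intro x b h1 h2
    ext z
    simp only [mem_image]
    constructor
    · rintro ⟨y, hy, rfl⟩
      have hfy : ⌊y⌋ = ⌊x⌋ := hfloor_eq x y hy.1 (lt_of_lt_of_le hy.2 h2)
      refine ⟨Int.fract y, ⟨?_, ?_⟩, ?_⟩
      · rw [hfx y, hfx x, hfy]; exact sub_le_sub_right hy.1 _
      · rw [hfx y, hfx x, hfy]; have := hy.2; push_cast; linarith
      · simp only [hg0def, hk0def, hfy]
    · rintro ⟨s, hs, rfl⟩
      refine ⟨x + (s - Int.fract x), ⟨by linarith [hs.1], by linarith [hs.2]⟩, ?_⟩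
      have hfloory : ⌊x + (s - Int.fract x)⌋ = ⌊x⌋ := by
        apply hfloor_eq x _ (by linarith [hs.1])
        have h3 : s < Int.fract x + (b - x) := hs.2
        have h4 := hfx x
        push_cast
        linarith
      have hfracty : Int.fract (x + (s - Int.fract x)) = s := by
        rw [hfx _, hfloory, hfx x]; ring
      simp only [hg0def, hk0def, hfloory, hfracty]
  have hpiece1 : ∀ x b : ℝ, x < b → b < ⌊x⌋ + 1 →
      g0 '' (Ico x b) = Dk (k0 x) ∩ Ico (g0 x) (Ψ (k0 x) (Int.fract x + (b - x))) := by
    intro x b h1 h2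
    rw [hpiece x b h1 (le_of_lt h2)]
    have hu : Int.fract x + (b - x) < 1 := by
      have := hfx x
      have h3 := Int.lt_floor_add_one x
      push_cast at h2 ⊢
      linarith
    have hl : (0:ℝ) ≤ Int.fract x + (b - x) := by linarith [(hfract x).1]
    exact himg1 (k0 x) (Int.fract x) (hfract x) (Int.fract x + (b - x)) ⟨hl, hu⟩ (by linarith)
  have hpiece2 : ∀ x : ℝ, g0 '' (Ico x (⌊x⌋ + 1)) = Dk (k0 x) ∩ Ici (g0 x) := by
    intro x
    have h1 : x < ⌊x⌋ + 1 := Int.lt_floor_add_one x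
    rw [hpiece x _ h1 le_rfl]
    have hu : Int.fract x + ((⌊x⌋ + 1) - x) = 1 := by rw [hfx x]; push_cast; ring
    rw [hu]
    exact himg2 (k0 x) (Int.fract x) (hfract x)
  -- continuity as a map ℝ → ℝ
  have hg0cont : Continuous g0 := by
    apply continuous_def.2
    intro U hU
    apply sorgenfrey_isOpen_iff.2
    intro x hx
    obtain ⟨v, hv, hIco⟩ := sorgenfrey_isOpen_iff.1 hU (g0 x) hx
    obtain ⟨c', hc'⟩ := hriC (g0 x) (hg0mem x) (v - g0 x) (by linarith)
    have hc'D : c' ∈ Dk (k0 x) := ⟨hc'.1, le_trans (hg0D x).2 (le_of_lt hc'.2.1)⟩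
    have hc'v : c' < v := by have := hc'.2.2; linarith
    obtain ⟨t', ht', hΨt'⟩ := hsurj (k0 x) c' hc'D
    have htt' : Int.fract x < t' := by
      rcases lt_trichotomy (Int.fract x) t' with h | h | h
      · exact h
      · exfalso
        have hgc : g0 x = c' := by simp only [hg0def]; rw [h, hΨt']
        have h2 := hc'.2.1
        rw [hgc] at h2
        exact lt_irrefl _ h2
      · exfalso
        have := hmono (k0 x) t' ht' (Int.fract x) (hfract x) h
        rw [hΨt'] at this
        have h2 := hc'.2.1
        rw [hg0def] at h2
        linarith
    set b : ℝ := min (x + (t' - Int.fract x)) (⌊x⌋ + 1) with hbdef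
    refine ⟨b, ?_, ?_⟩
    · apply lt_min (by linarith) (Int.lt_floor_add_one x)
    · intro y hy
      have hyb1 : y < x + (t' - Int.fract x) := lt_of_lt_of_le hy.2 (min_le_left _ _)
      have hyb2 : y < ⌊x⌋ + 1 := lt_of_lt_of_le hy.2 (min_le_right _ _)
      have hfy : ⌊y⌋ = ⌊x⌋ := hfloor_eq x y hy.1 hyb2
      have hk : k0 y = k0 x := by simp only [hk0def, hfy]
      have hfyval : Int.fract y = y - ⌊x⌋ := by rw [hfx y, hfy]
      have hfylt : Int.fract y < t' := by
        rw [hfyval]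
        have := hfx x
        linarith
      have hfyge : Int.fract x ≤ Int.fract y := by
        rw [hfyval, hfx x]
        linarith [hy.1]
      apply hIco
      rcases eq_or_lt_of_le hfyge with h | h
      · have : g0 y = g0 x := by simp only [hg0def, hk, ← h]
        rw [this]
        exact ⟨le_rfl, hv⟩
      · have hΨlt : g0 x < g0 y := by
          simp only [hg0def, hk]
          exact hmono (k0 x) (Int.fract x) (hfract x) (Int.fract y) (hfract y) h
        have hΨlt2 : g0 y < c' := by
          rw [← hΨt']
          simp only [hg0def, hk]
          exact hmono (k0 x) (Int.fract y) (hfract y) t' ht' hfylt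
        exact ⟨le_of_lt hΨlt, lt_trans hΨlt2 hc'v⟩
  -- the subtype-valued map
  set g0' : ℝ → ↥C := fun x => ⟨g0 x, hg0mem x⟩ with hg0'def
  refine ⟨g0', ?_, ?_, ?_⟩
  · exact Continuous.subtype_mk hg0cont hg0mem
  · -- open map
    intro U hU
    apply isOpen_iff_forall_mem_open.2
    rintro z ⟨x, hxU, rfl⟩
    obtain ⟨v, hv, hIco⟩ := sorgenfrey_isOpen_iff.1 hU x hxU
    rcases le_or_gt (⌊x⌋ + 1 : ℝ) v with hble | hblt
    · -- use the whole piece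
      refine ⟨Subtype.val ⁻¹' (Ici (g0 x)), ?_, ?_, ?_⟩
      · rintro ⟨z', hz'C⟩ hz'
        have hz'mem : z' ∈ Dk (k0 x) ∩ Ici (g0 x) :=
          ⟨⟨hz'C, Set.mem_Ici.2 (le_trans (hg0D x).2 hz')⟩, hz'⟩
        rw [← hpiece2 x] at hz'mem
        obtain ⟨y, hy, hyval⟩ := hz'mem
        have hyU : y ∈ U := hIco ⟨hy.1, lt_of_lt_of_le hy.2 hble⟩
        exact ⟨y, hyU, Subtype.ext hyval⟩
      · exact (isOpen_Ici' (g0 x)).preimage continuous_subtype_val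
      · exact Set.mem_preimage.2 Set.self_mem_Ici
    · -- use Ico x v
      have hxv : x < v := hv
      set w : ℝ := Ψ (k0 x) (Int.fract x + (v - x)) with hwdef
      have himgv : g0 '' (Ico x v) = Dk (k0 x) ∩ Ico (g0 x) w := hpiece1 x v hxv hblt
      have hgw : g0 x < w := by
        rw [hwdef, hg0def]
        apply hmono (k0 x) (Int.fract x) (hfract x) (Int.fract x + (v - x)) ?_ (by linarith)
        constructor
        · linarith [(hfract x).1]
        · have := hfx x
          have h3 := Int.lt_floor_add_one x
          push_cast at hblt ⊢
          linarith
      refine ⟨Subtype.val ⁻¹' (Ico (g0 x) w), ?_, ?_, ?_⟩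
      · rintro ⟨z', hz'C⟩ hz'
        have hz'mem : z' ∈ Dk (k0 x) ∩ Ico (g0 x) w :=
          ⟨⟨hz'C, le_trans (hg0D x).2 hz'.1⟩, hz'⟩
        rw [← himgv] at hz'mem
        obtain ⟨y, hy, hyval⟩ := hz'mem
        exact ⟨y, hIco hy, Subtype.ext hyval⟩
      · exact (isOpen_Ico' (g0 x) w).preimage continuous_subtype_val
      · exact ⟨le_rfl, hgw⟩
  · -- surjectivity
    rintro ⟨c, hcC⟩
    set k : ℕ := ⌈c₀ - c⌉₊ with hkdef
    have hk : c₀ - k ≤ c := by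
      have := Nat.le_ceil (c₀ - c)
      linarith
    have hcD : c ∈ Dk k := ⟨hcC, hdkmin k c hcC hk⟩
    obtain ⟨t, ht, hΨt⟩ := hsurj k c hcD
    refine ⟨(k : ℝ) + t, ?_⟩
    have hfloor : ⌊(k : ℝ) + t⌋ = (k : ℤ) := by
      apply Int.floor_eq_iff.2
      constructor
      · push_cast; linarith [ht.1]
      · push_cast; linarith [ht.2]
    have hfract' : Int.fract ((k : ℝ) + t) = t := by
      rw [hfx _, hfloor]; push_cast; ring
    have hk0 : k0 ((k : ℝ) + t) = k := by
      simp only [hk0def, hfloor, Int.natAbs_natCast]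
    apply Subtype.ext
    show g0 ((k : ℝ) + t) = c
    rw [hg0def]
    simp only [hk0, hfract']
    exact hΨt

end Stmt17Aux


/-- Being a continuous open image of the Sorgenfrey line is preserved by
nonempty closed subspaces without isolated points. -/
theorem stmt17 {X : Type*} (τ : TopologicalSpace X)
    (f : ℝ → X) (hc : @Continuous ℝ X sorgenfreyTop τ f)
    (ho : @IsOpenMap ℝ X sorgenfreyTop τ f) (hs : Function.Surjective f)
    (F : Set X) (hF : IsClosed[τ] F) (hne : F.Nonempty)
    (hiso : ∀ x : ↥F, ¬ IsOpen[TopologicalSpace.induced Subtype.val τ] ({x} : Set ↥F)) :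
    ∃ g : ℝ → ↥F, @Continuous ℝ ↥F sorgenfreyTop (TopologicalSpace.induced Subtype.val τ) g ∧
      @IsOpenMap ℝ ↥F sorgenfreyTop (TopologicalSpace.induced Subtype.val τ) g ∧
      Function.Surjective g := by
  classical
  letI : TopologicalSpace X := τ
  letI : TopologicalSpace ℝ := sorgenfreyTop
  set C : Set ℝ := f ⁻¹' F with hCdef
  have hCcl : IsClosed C := hF.preimage hc
  have hclC : ∀ x : ℝ, (∀ ε > 0, (C ∩ Ico x (x + ε)).Nonempty) → x ∈ C := by
    intro x hx
    by_contra hxC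
    have hopen : IsOpen Cᶜ := hCcl.isOpen_compl
    obtain ⟨b, hb, hsub⟩ := Stmt17Aux.sorgenfrey_isOpen_iff.1 hopen x hxC
    obtain ⟨y, hy⟩ := hx (b - x) (by linarith)
    exact hsub ⟨hy.2.1, by have := hy.2.2; linarith⟩ hy.1
  have hfc_open : IsOpenMap (F.restrictPreimage f) := ho.restrictPreimage F
  have hriC : ∀ c ∈ C, ∀ ε > 0, (C ∩ Ioo c (c + ε)).Nonempty := by
    intro c hc' ε hε
    by_contra hcon
    rw [Set.not_nonempty_iff_eq_empty] at hcon
    have hsing : (Subtype.val ⁻¹' (Ico c (c + ε)) : Set ↥C) = {⟨c, hc'⟩} := by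
      ext ⟨z, hz⟩
      simp only [mem_preimage, mem_singleton_iff, Subtype.mk_eq_mk]
      constructor
      · intro hzI
        by_contra hne'
        have hzo : z ∈ C ∩ Ioo c (c + ε) :=
          ⟨hz, lt_of_le_of_ne hzI.1 (Ne.symm hne'), hzI.2⟩
        rw [hcon] at hzo
        exact hzo
      · rintro rfl
        exact ⟨le_rfl, by linarith⟩
    have hopen1 : IsOpen (Subtype.val ⁻¹' (Ico c (c + ε)) : Set ↥C) :=
      (Stmt17Aux.isOpen_Ico' c (c + ε)).preimage continuous_subtype_val
    rw [hsing] at hopen1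
    have himg := hfc_open _ hopen1
    rw [Set.image_singleton] at himg
    exact hiso (F.restrictPreimage f ⟨c, hc'⟩) himg
  obtain ⟨y0, hy0⟩ := hne
  obtain ⟨x0, hx0⟩ := hs y0
  have hx0C : x0 ∈ C := by
    show f x0 ∈ F
    rw [hx0]
    exact hy0
  obtain ⟨g0, hg0c, hg0o, hg0s⟩ := Stmt17Aux.sorgenfrey_onto_closed C ⟨x0, hx0C⟩ hclC hriC
  refine ⟨(F.restrictPreimage f) ∘ g0, ?_, ?_, ?_⟩
  · exact hc.restrictPreimage.comp hg0c
  · exact (ho.restrictPreimage F).comp hg0o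
  · rintro ⟨y, hy⟩
    obtain ⟨x, hx⟩ := hs y
    have hxC : x ∈ C := by
      show f x ∈ F
      rw [hx]
      exact hy
    obtain ⟨r, hr⟩ := hg0s ⟨x, hxC⟩
    refine ⟨r, ?_⟩
    show F.restrictPreimage f (g0 r) = ⟨y, hy⟩
    rw [hr]
    exact Subtype.ext hx
end
end
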